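/- arXiv:1911.11077 — 2 statements merged into one kernel-verified Lean document; each statement's English description precedes it below -/
import Mathlib

section
/- Consider the system y' = −Ay + G(y) + f(t) in ℝⁿ, where A is diagonalizable with positive eigenvalues and G is locally Lipschitz with |G(y)| ≤ c*|y|² for |y| < r*. There exist ε₀, ε₁ > 0 such that: if |y₀| < ε₀ and f ∈ C([0,∞), ℝⁿ) with sup_t |f(t)| < ε₁, then there is a unique solution y ∈ C¹([0,∞), ℝⁿ) with y(0) = y₀; moreover, if additionally f(t) → 0 as t → ∞, then y(t) → 0 as t → ∞. -/
open Set Filter intervalIntegral Real Topology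

lemma mild_scalar {μ : ℝ} {h x : ℝ → ℝ} {a b : ℝ} (hab : a ≤ b)
    (hx : ContinuousOn x (Icc a b))
    (hd : ∀ t ∈ Ico a b, HasDerivWithinAt x (-(μ * x t) + h t) (Ici t) t)
    (hh : ContinuousOn h (Icc a b)) :
    x b = Real.exp (-(μ * (b - a))) * x a + ∫ s in a..b, Real.exp (μ * (s - b)) * h s := by
  set u : ℝ → ℝ := fun t => Real.exp (μ * t) * x t with hu
  have hucont : ContinuousOn u (Icc a b) :=
    (Real.continuous_exp.comp (continuous_const.mul continuous_id)).continuousOn.mul hx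
  have hud : ∀ t ∈ Ioo a b, HasDerivWithinAt u (Real.exp (μ * t) * h t) (Ioi t) t := by
    intro t ht
    have h1 : HasDerivWithinAt (fun s => Real.exp (μ * s)) (Real.exp (μ * t) * μ) (Ioi t) t := by
      have := ((hasDerivAt_id t).const_mul μ).exp
      simpa [mul_comm] using this.hasDerivWithinAt
    have h2 : HasDerivWithinAt x (-(μ * x t) + h t) (Ioi t) t :=
      (hd t ⟨ht.1.le, ht.2⟩).mono Ioi_subset_Ici_self
    have := h1.mul h2
    convert this using 1
    · rfl
    · rfl
    · rfl
    ring
  have hint : IntervalIntegrable (fun t => Real.exp (μ * t) * h t) MeasureTheory.volume a b := by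
    apply ContinuousOn.intervalIntegrable
    rw [uIcc_of_le hab]
    exact (Real.continuous_exp.comp (continuous_const.mul continuous_id)).continuousOn.mul hh
  have key : ∫ s in a..b, Real.exp (μ * s) * h s = u b - u a :=
    integral_eq_sub_of_hasDeriv_right_of_le hab hucont hud hint
  have hb' : x b = Real.exp (-(μ * b)) * u b := by
    simp only [hu, ← mul_assoc, ← Real.exp_add]
    simp
  have key2 : u b = u a + ∫ s in a..b, Real.exp (μ * s) * h s := by
    rw [key]; ring
  rw [hb', key2]
  have : Real.exp (-(μ * b)) * (u a + ∫ s in a..b, Real.exp (μ * s) * h s)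
      = Real.exp (-(μ * (b - a))) * x a + ∫ s in a..b, Real.exp (μ * (s - b)) * h s := by
    rw [mul_add, ← intervalIntegral.integral_const_mul]
    congr 1
    · rw [hu]; simp only [← mul_assoc, ← Real.exp_add]; ring_nf
    · apply intervalIntegral.integral_congr
      intro s _
      simp only [← mul_assoc, ← Real.exp_add]
      ring_nf
  rw [← this]

lemma exp_integral_aux {μ a b : ℝ} (hμ : 0 < μ) (hab : a ≤ b) :
    ∫ s in a..b, Real.exp (μ * (s - b)) = (1 - Real.exp (-(μ * (b - a)))) / μ := by
  have hd : ∀ s ∈ uIcc a b, HasDerivAt (fun s => Real.exp (μ * (s - b)) / μ)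
      (Real.exp (μ * (s - b))) s := by
    intro s _
    have : HasDerivAt (fun s => μ * (s - b)) μ s := by
      simpa using (((hasDerivAt_id s).sub_const b).const_mul μ)
    have := this.exp
    have h2 := this.div_const μ
    convert h2 using 1
    · rfl
    · rfl
    field_simp
  have hint : IntervalIntegrable (fun s => Real.exp (μ * (s - b))) MeasureTheory.volume a b := by
    apply Continuous.intervalIntegrable
    exact Real.continuous_exp.comp (by continuity)
  rw [intervalIntegral.integral_eq_sub_of_hasDerivAt hd hint]
  rw [show μ * (b - b) = 0 by ring]
  rw [show -(μ * (b - a)) = μ * (a - b) by ring]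
  simp [div_sub_div_same]
  ring

lemma mild_est {μ : ℝ} (hμ : 0 < μ) {h x : ℝ → ℝ} {a b : ℝ} (hab : a ≤ b)
    (hx : ContinuousOn x (Icc a b))
    (hd : ∀ t ∈ Ico a b, HasDerivWithinAt x (-(μ * x t) + h t) (Ici t) t)
    (hh : ContinuousOn h (Icc a b))
    {d m : ℝ} (hd0 : |x a| ≤ d) (hm : ∀ s ∈ Icc a b, |h s| ≤ m) :
    |x b| ≤ Real.exp (-(μ * (b - a))) * d + (1 - Real.exp (-(μ * (b - a)))) * (m / μ) := by
  have hm0 : 0 ≤ m := le_trans (abs_nonneg _) (hm a ⟨le_rfl, hab⟩)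
  rw [mild_scalar hab hx hd hh]
  have h1 : |∫ s in a..b, Real.exp (μ * (s - b)) * h s|
      ≤ ∫ s in a..b, Real.exp (μ * (s - b)) * m := by
    refine (intervalIntegral.abs_integral_le_integral_abs hab).trans ?_
    apply intervalIntegral.integral_mono_on hab
    · apply ContinuousOn.intervalIntegrable
      rw [uIcc_of_le hab]
      exact ((Real.continuous_exp.comp (by continuity)).continuousOn.mul hh).abs
    · apply Continuous.intervalIntegrable
      exact (Real.continuous_exp.comp (by continuity)).mul continuous_const
    · intro s hs
      rw [abs_mul, abs_of_pos (Real.exp_pos _)]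
      exact mul_le_mul_of_nonneg_left (hm s hs) (Real.exp_pos _).le
  have h2 : ∫ s in a..b, Real.exp (μ * (s - b)) * m
      = (1 - Real.exp (-(μ * (b - a)))) * (m / μ) := by
    rw [intervalIntegral.integral_mul_const, exp_integral_aux hμ hab]
    ring
  calc |Real.exp (-(μ * (b - a))) * x a + ∫ s in a..b, Real.exp (μ * (s - b)) * h s|
      ≤ |Real.exp (-(μ * (b - a))) * x a| + |∫ s in a..b, Real.exp (μ * (s - b)) * h s| :=
        abs_add_le _ _
    _ ≤ Real.exp (-(μ * (b - a))) * d + (1 - Real.exp (-(μ * (b - a)))) * (m / μ) := by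
        rw [abs_mul, abs_of_pos (Real.exp_pos _)]
        gcongr
        rw [← h2]; exact h1

lemma coord_deriv {n : ℕ} {x : ℝ → (Fin n → ℝ)} {w : Fin n → ℝ} {s : Set ℝ} {t : ℝ}
    (hd : HasDerivWithinAt x w s t) (i : Fin n) :
    HasDerivWithinAt (fun t => x t i) (w i) s t :=
  (ContinuousLinearMap.proj (R := ℝ) (φ := fun _ : Fin n => ℝ) i).hasFDerivAt.comp_hasDerivWithinAt t hd

lemma mild_est_vec {n : ℕ} {Λ : Fin n → ℝ} {lam : ℝ} (hlam : 0 < lam) (hΛl : ∀ i, lam ≤ Λ i)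
    {x h : ℝ → (Fin n → ℝ)} {a b : ℝ} (hab : a ≤ b)
    (hx : ContinuousOn x (Icc a b)) (hh : ContinuousOn h (Icc a b))
    (hd : ∀ t ∈ Ico a b, HasDerivWithinAt x ((fun i => -(Λ i * x t i)) + h t) (Ici t) t)
    {d m : ℝ} (hm0 : 0 ≤ m) (hd0 : ‖x a‖ ≤ d)
    (hm : ∀ s ∈ Icc a b, ‖h s‖ ≤ m) (i : Fin n) :
    |x b i| ≤ Real.exp (-(Λ i * (b - a))) * d + (1 - Real.exp (-(Λ i * (b - a)))) * (m / Λ i) := by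
  have hμ : 0 < Λ i := lt_of_lt_of_le hlam (hΛl i)
  apply mild_est hμ hab
  · exact (continuous_apply i).comp_continuousOn hx
  · intro t ht
    have := coord_deriv (hd t ht) i
    simpa using this
  · exact (continuous_apply i).comp_continuousOn hh
  · calc |x a i| ≤ ‖x a‖ := by simpa [Real.norm_eq_abs] using norm_le_pi_norm (x a) i
      _ ≤ d := hd0
  · intro s hs
    calc |h s i| ≤ ‖h s‖ := by simpa [Real.norm_eq_abs] using norm_le_pi_norm (h s) i
      _ ≤ m := hm s hs

lemma mild_est_vec_exp {n : ℕ} {Λ : Fin n → ℝ} {lam : ℝ} (hlam : 0 < lam) (hΛl : ∀ i, lam ≤ Λ i)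
    {x h : ℝ → (Fin n → ℝ)} {a b : ℝ} (hab : a ≤ b)
    (hx : ContinuousOn x (Icc a b)) (hh : ContinuousOn h (Icc a b))
    (hd : ∀ t ∈ Ico a b, HasDerivWithinAt x ((fun i => -(Λ i * x t i)) + h t) (Ici t) t)
    {d m : ℝ} (hm0 : 0 ≤ m) (hd0 : ‖x a‖ ≤ d)
    (hm : ∀ s ∈ Icc a b, ‖h s‖ ≤ m) :
    ‖x b‖ ≤ Real.exp (-(lam * (b - a))) * d + m / lam := by
  have hd0' : 0 ≤ d := le_trans (norm_nonneg _) hd0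
  have hrhs : 0 ≤ Real.exp (-(lam * (b - a))) * d + m / lam := by positivity
  rw [pi_norm_le_iff_of_nonneg hrhs]
  intro i
  have hμ : 0 < Λ i := lt_of_lt_of_le hlam (hΛl i)
  have key := mild_est_vec hlam hΛl hab hx hh hd hm0 hd0 hm i
  rw [Real.norm_eq_abs]
  refine key.trans ?_
  have e1 : Real.exp (-(Λ i * (b - a))) ≤ Real.exp (-(lam * (b - a))) := by
    apply Real.exp_le_exp.mpr
    have := mul_le_mul_of_nonneg_right (hΛl i) (sub_nonneg.mpr hab)
    linarith
  have e2 : (1 - Real.exp (-(Λ i * (b - a)))) * (m / Λ i) ≤ m / lam := by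
    have h1 : (1 - Real.exp (-(Λ i * (b - a)))) ≤ 1 := by
      have := Real.exp_pos (-(Λ i * (b - a))); linarith
    have h2 : 0 ≤ (1 - Real.exp (-(Λ i * (b - a)))) := by
      have : Real.exp (-(Λ i * (b - a))) ≤ 1 := by
        apply Real.exp_le_one_iff.mpr  -- maybe wrong name
        have : 0 ≤ Λ i * (b - a) := mul_nonneg hμ.le (sub_nonneg.mpr hab)
        linarith
      linarith
    have h3 : m / Λ i ≤ m / lam := by
      apply div_le_div_of_nonneg_left hm0 hlam (hΛl i)  -- check name
    calc (1 - Real.exp (-(Λ i * (b - a)))) * (m / Λ i) ≤ 1 * (m / Λ i) := by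
          apply mul_le_mul_of_nonneg_right h1 (by positivity)
      _ = m / Λ i := one_mul _
      _ ≤ m / lam := h3
  gcongr

lemma mild_est_vec_max {n : ℕ} {Λ : Fin n → ℝ} {lam : ℝ} (hlam : 0 < lam) (hΛl : ∀ i, lam ≤ Λ i)
    {x h : ℝ → (Fin n → ℝ)} {a b : ℝ} (hab : a ≤ b)
    (hx : ContinuousOn x (Icc a b)) (hh : ContinuousOn h (Icc a b))
    (hd : ∀ t ∈ Ico a b, HasDerivWithinAt x ((fun i => -(Λ i * x t i)) + h t) (Ici t) t)
    {d m : ℝ} (hm0 : 0 ≤ m) (hd0 : ‖x a‖ ≤ d)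
    (hm : ∀ s ∈ Icc a b, ‖h s‖ ≤ m) :
    ‖x b‖ ≤ max d (m / lam) := by
  have hd0' : 0 ≤ d := le_trans (norm_nonneg _) hd0
  have hrhs : 0 ≤ max d (m / lam) := le_max_of_le_left hd0'
  rw [pi_norm_le_iff_of_nonneg hrhs]
  intro i
  have hμ : 0 < Λ i := lt_of_lt_of_le hlam (hΛl i)
  have key := mild_est_vec hlam hΛl hab hx hh hd hm0 hd0 hm i
  rw [Real.norm_eq_abs]
  refine key.trans ?_
  set e := Real.exp (-(Λ i * (b - a))) with he
  have he1 : e ≤ 1 := by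
    rw [he]
    apply Real.exp_le_one_iff.mpr
    have : 0 ≤ Λ i * (b - a) := mul_nonneg hμ.le (sub_nonneg.mpr hab)
    linarith
  have he0 : 0 < e := Real.exp_pos _
  have h3 : m / Λ i ≤ m / lam := div_le_div_of_nonneg_left hm0 hlam (hΛl i)  -- check
  calc e * d + (1 - e) * (m / Λ i) ≤ e * max d (m / lam) + (1 - e) * max d (m / lam) :=
        add_le_add (mul_le_mul_of_nonneg_left (le_max_left _ _) he0.le)
          (mul_le_mul_of_nonneg_left (h3.trans (le_max_right _ _)) (by linarith))
    _ = max d (m / lam) := by ring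

lemma apriori_bound {n : ℕ} {Λ : Fin n → ℝ} {lam : ℝ} (hlam : 0 < lam) (hΛl : ∀ i, lam ≤ Λ i)
    {g : (Fin n → ℝ) → (Fin n → ℝ)} {Fc : ℝ → (Fin n → ℝ)} {R : ℝ} (hR : 0 < R)
    (hgc : Continuous g) (hFcont : Continuous Fc)
    (hgb : ∀ p : Fin n → ℝ, ‖p‖ ≤ R → ‖g p‖ ≤ lam * R / 4)
    (hFb : ∀ t : ℝ, ‖Fc t‖ ≤ lam * R / 4)
    {x : ℝ → (Fin n → ℝ)} {b : ℝ} (hb : 0 ≤ b)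
    (hx : ContinuousOn x (Icc 0 b))
    (hd : ∀ t ∈ Ico 0 b, HasDerivWithinAt x
      ((fun i => -(Λ i * x t i)) + (g (x t) + Fc t)) (Ici t) t)
    (hx0 : ‖x 0‖ ≤ R / 2) :
    ∀ t ∈ Icc 0 b, ‖x t‖ ≤ R / 2 := by
  have step : ∀ t ∈ Icc 0 b, (∀ s ∈ Icc 0 t, ‖x s‖ ≤ R) → ‖x t‖ ≤ R / 2 := by
    intro t ht hsmall
    have hIcc : Icc 0 t ⊆ Icc 0 b := Icc_subset_Icc le_rfl ht.2
    have key := mild_est_vec_max hlam hΛl (a := 0) (b := t) ht.1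
      (hx.mono hIcc) (((hgc.comp_continuousOn (hx.mono hIcc))).add hFcont.continuousOn)
      (fun s hs => hd s ⟨hs.1, lt_of_lt_of_le hs.2 ht.2⟩)
      (m := lam * R / 2) (by positivity) hx0
      (fun s hs => by
        calc ‖g (x s) + Fc s‖ ≤ ‖g (x s)‖ + ‖Fc s‖ := norm_add_le _ _
          _ ≤ lam * R / 4 + lam * R / 4 := add_le_add (hgb _ (hsmall s hs)) (hFb s)
          _ = lam * R / 2 := by ring)
    have : lam * R / 2 / lam = R / 2 := by field_simp
    rw [this, max_self] at key
    exact key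
  have hRall : ∀ t ∈ Icc 0 b, ‖x t‖ ≤ R := by
    by_contra hcon
    push_neg at hcon
    set Bad := {t | t ∈ Icc 0 b ∧ R < ‖x t‖} with hBad
    have hne : Bad.Nonempty := by
      obtain ⟨t, ht, hlt⟩ := hcon
      exact ⟨t, ht, hlt⟩
    have hbdd : BddBelow Bad := ⟨0, fun t ht => ht.1.1⟩
    set τ := sInf Bad with hτ
    have hclosed : IsClosed {t | t ∈ Icc 0 b ∧ R ≤ ‖x t‖} := by
      have heq : {t | t ∈ Icc 0 b ∧ R ≤ ‖x t‖} = Icc 0 b ∩ (fun t => ‖x t‖)⁻¹' (Ici R) := by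
        ext t; simp [Set.mem_setOf_eq]
      rw [heq]
      exact (hx.norm).preimage_isClosed_of_isClosed isClosed_Icc (isClosed_Ici (a := R))
    have hτC : τ ∈ {t | t ∈ Icc 0 b ∧ R ≤ ‖x t‖} := by
      have h1 : τ ∈ closure Bad := csInf_mem_closure hne hbdd
      have h2 : closure Bad ⊆ {t | t ∈ Icc 0 b ∧ R ≤ ‖x t‖} :=
        closure_minimal (fun t ht => ⟨ht.1, ht.2.le⟩) hclosed
      exact h2 h1
    have hτIcc : τ ∈ Icc 0 b := hτC.1
    have hbelow : ∀ s ∈ Icc 0 τ, ‖x s‖ ≤ R := by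
      intro s hs
      rcases eq_or_lt_of_le hs.2 with heq | hlt
      · subst heq
        -- s = τ; use continuity from the left, or s = 0
        rcases eq_or_lt_of_le hs.1 with h0 | h0
        · have h1 : ‖x 0‖ ≤ R := by linarith
          rwa [h0] at h1
        · -- 0 < τ
          have hne2 : (𝓝[Ico 0 τ] τ).NeBot := by
            rw [← mem_closure_iff_nhdsWithin_neBot, closure_Ico h0.ne]
            exact ⟨hs.1, le_rfl⟩
          have htend : Filter.Tendsto (fun u => ‖x u‖) (𝓝[Ico 0 τ] τ) (𝓝 ‖x τ‖) := by
            apply Filter.Tendsto.mono_left ((hx.norm).continuousWithinAt ⟨hs.1, hτIcc.2⟩)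
            exact nhdsWithin_mono _ (fun u hu => ⟨hu.1, le_trans hu.2.le hτIcc.2⟩)
          refine le_of_tendsto htend ?_
          filter_upwards [self_mem_nhdsWithin] with u hu
          have : u ∉ Bad := fun hmem => not_lt.mpr (csInf_le hbdd hmem) hu.2
          simp only [hBad, Set.mem_setOf_eq, not_and, not_lt] at this
          exact this ⟨hu.1, le_trans hu.2.le hτIcc.2⟩
      · have : s ∉ Bad := fun hmem => not_lt.mpr (csInf_le hbdd hmem) hlt
        simp only [hBad, Set.mem_setOf_eq, not_and, not_lt] at this
        exact this ⟨hs.1, le_trans hs.2 hτIcc.2⟩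
    have := step τ hτIcc hbelow
    have := hτC.2
    linarith
  intro t ht
  exact step t ht (fun s hs => hRall s ⟨hs.1, le_trans hs.2 ht.2⟩)

lemma decay_lemma {n : ℕ} {Λ : Fin n → ℝ} {lam : ℝ} (hlam : 0 < lam) (hΛl : ∀ i, lam ≤ Λ i)
    {g : (Fin n → ℝ) → (Fin n → ℝ)} {Fc : ℝ → (Fin n → ℝ)} {R c₂ : ℝ} (hR : 0 < R)
    (hgc : Continuous g) (hFcont : Continuous Fc)
    (hgq : ∀ p : Fin n → ℝ, ‖p‖ ≤ R → ‖g p‖ ≤ c₂ * ‖p‖ ^ 2)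
    (hc₂ : 0 ≤ c₂) (hc₂R : c₂ * R ≤ lam / 4)
    {x : ℝ → (Fin n → ℝ)} (hxc : ContinuousOn x (Ici 0))
    (hd : ∀ t ≥ (0:ℝ), HasDerivWithinAt x
      ((fun i => -(Λ i * x t i)) + (g (x t) + Fc t)) (Ici t) t)
    (hxb : ∀ t ≥ (0:ℝ), ‖x t‖ ≤ R / 2)
    (hF0 : Tendsto Fc atTop (𝓝 0)) :
    Tendsto x atTop (𝓝 0) := by
  have main : ∀ k : ℕ, ∀ᶠ t in atTop, ‖x t‖ ≤ R / 2 * (3 / 4) ^ k := by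
    intro k
    induction k with
    | zero =>
      filter_upwards [eventually_ge_atTop (0:ℝ)] with t ht
      simpa using hxb t ht
    | succ k ih =>
      set ρ := R / 2 * (3 / 4 : ℝ) ^ k with hρ
      have hρpos : 0 < ρ := by positivity
      have hρR : ρ ≤ R / 2 := by
        rw [hρ]
        calc R / 2 * (3 / 4 : ℝ) ^ k ≤ R / 2 * 1 := by
              apply mul_le_mul_of_nonneg_left _ (by positivity)
              exact pow_le_one₀ (by norm_num) (by norm_num)
          _ = R / 2 := mul_one _
      have hFev : ∀ᶠ t in atTop, ‖Fc t‖ ≤ lam * ρ / 8 := by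
        have := hF0.eventually (Metric.ball_mem_nhds (0 : Fin n → ℝ) (by positivity :
          (0:ℝ) < lam * ρ / 8))
        filter_upwards [this] with t ht
        exact (mem_ball_zero_iff.mp ht).le
      obtain ⟨T₁, hT₁⟩ := eventually_atTop.mp ih
      obtain ⟨T₂, hT₂⟩ := eventually_atTop.mp hFev
      set T := max 0 (max T₁ T₂) with hT
      have hT0 : 0 ≤ T := le_max_left _ _
      have hbnd : ∀ s ∈ Ici T, ‖g (x s) + Fc s‖ ≤ lam * ρ / 4 := by
        intro s hs
        have hs0 : (0:ℝ) ≤ s := le_trans hT0 hs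
        have hsρ : ‖x s‖ ≤ ρ := hT₁ s (le_trans (le_trans (le_max_left _ _) (le_max_right _ _)) hs)
        have hsR2 : ‖x s‖ ≤ R / 2 := hxb s hs0
        have hgs : ‖g (x s)‖ ≤ lam * ρ / 8 := by
          have h1 : ‖g (x s)‖ ≤ c₂ * ‖x s‖ ^ 2 := hgq _ (by linarith)
          have h2 : c₂ * ‖x s‖ ^ 2 ≤ c₂ * ((R / 2) * ρ) := by
            apply mul_le_mul_of_nonneg_left _ hc₂
            rw [pow_two]
            exact mul_le_mul hsR2 hsρ (norm_nonneg _) (by linarith)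
          have h3 : c₂ * ((R / 2) * ρ) ≤ (lam / 4) * (ρ / 2) := by
            calc c₂ * ((R / 2) * ρ) = (c₂ * R) * (ρ / 2) := by ring
              _ ≤ (lam / 4) * (ρ / 2) := by
                  apply mul_le_mul_of_nonneg_right hc₂R (by positivity)
          calc ‖g (x s)‖ ≤ c₂ * ‖x s‖ ^ 2 := h1
            _ ≤ c₂ * ((R / 2) * ρ) := h2
            _ ≤ (lam / 4) * (ρ / 2) := h3
            _ = lam * ρ / 8 := by ring
        have hFs : ‖Fc s‖ ≤ lam * ρ / 8 :=
          hT₂ s (le_trans (le_trans (le_max_right _ _) (le_max_right _ _)) hs)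
        calc ‖g (x s) + Fc s‖ ≤ ‖g (x s)‖ + ‖Fc s‖ := norm_add_le _ _
          _ ≤ lam * ρ / 8 + lam * ρ / 8 := add_le_add hgs hFs
          _ = lam * ρ / 4 := by ring
      filter_upwards [eventually_ge_atTop (T + Real.log 2 / lam)] with t ht
      have htT : T ≤ t := by
        have hlog : 0 ≤ Real.log 2 / lam := by
          apply div_nonneg _ hlam.le
          exact Real.log_nonneg (by norm_num)
        linarith
      have key := mild_est_vec_exp hlam hΛl (a := T) (b := t) htT
        (hxc.mono (Icc_subset_Icc_left hT0 |>.trans (Icc_subset_Ici_self.trans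
            (by intro u hu; exact hu))))
        (((hgc.comp_continuousOn (hxc.mono (fun u hu => le_trans hT0 hu.1)))).add
          hFcont.continuousOn)
        (fun s hs => hd s (le_trans hT0 hs.1))
        (m := lam * ρ / 4) (by positivity)
        (hT₁ T (le_trans (le_max_left _ _) (le_max_right _ _)))
        (fun s hs => hbnd s hs.1)
      have hexp : Real.exp (-(lam * (t - T))) ≤ 1 / 2 := by
        have h1 : Real.log 2 ≤ lam * (t - T) := by
          have h2 : Real.log 2 / lam ≤ t - T := by linarith
          calc Real.log 2 = lam * (Real.log 2 / lam) := by field_simp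
            _ ≤ lam * (t - T) := mul_le_mul_of_nonneg_left h2 hlam.le
        calc Real.exp (-(lam * (t - T))) ≤ Real.exp (-(Real.log 2)) := by
              apply Real.exp_le_exp.mpr; linarith
          _ = 1 / 2 := by
              rw [Real.exp_neg, Real.exp_log (by norm_num : (0:ℝ) < 2)]
              norm_num
      have hdiv : lam * ρ / 4 / lam = ρ / 4 := by field_simp
      calc ‖x t‖ ≤ Real.exp (-(lam * (t - T))) * ρ + lam * ρ / 4 / lam := key
        _ ≤ (1 / 2) * ρ + ρ / 4 := by
            rw [hdiv]
            have := mul_le_mul_of_nonneg_right hexp hρpos.le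
            linarith
        _ ≤ R / 2 * (3 / 4) ^ (k + 1) := by
            have : R / 2 * (3 / 4 : ℝ) ^ (k + 1) = ρ * (3 / 4) := by
              rw [hρ, pow_succ]; ring
            rw [this]
            linarith
  rw [NormedAddCommGroup.tendsto_nhds_zero]
  intro ε hε
  obtain ⟨k, hk⟩ := exists_pow_lt_of_lt_one (show (0:ℝ) < ε / (R / 2) by positivity)
    (by norm_num : (3/4 : ℝ) < 1)
  filter_upwards [main k] with t ht
  have : R / 2 * (3 / 4 : ℝ) ^ k < ε := by
    rw [lt_div_iff₀ (by positivity : (0:ℝ) < R / 2)] at hk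
    linarith [hk]
  exact lt_of_le_of_lt ht this

lemma lin_part_lipschitz {n : ℕ} (Λ : Fin n → ℝ) :
    LipschitzWith ‖Λ‖₊ (fun p : Fin n → ℝ => (fun i => -(Λ i * p i))) := by
  apply LipschitzWith.of_dist_le_mul
  intro p q
  rw [dist_eq_norm, dist_eq_norm]
  have hnn : (0:ℝ) ≤ ‖Λ‖ * ‖p - q‖ := by positivity
  rw [coe_nnnorm, pi_norm_le_iff_of_nonneg hnn]
  intro i
  have h1 : ((fun i => -(Λ i * p i)) - fun i => -(Λ i * q i)) i = -(Λ i * (p i - q i)) := by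
    simp; ring
  rw [h1]
  rw [norm_neg, norm_mul]
  have h2 : ‖Λ i‖ ≤ ‖Λ‖ := norm_le_pi_norm Λ i
  have h3 : ‖p i - q i‖ ≤ ‖p - q‖ := by
    simpa using norm_le_pi_norm (p - q) i
  exact mul_le_mul h2 h3 (norm_nonneg _) (norm_nonneg _)

lemma exists_global_sol {n : ℕ} {Λ : Fin n → ℝ} {lam : ℝ} (hlam : 0 < lam)
    (hΛl : ∀ i, lam ≤ Λ i)
    {g : (Fin n → ℝ) → (Fin n → ℝ)} {Fc : ℝ → (Fin n → ℝ)} {R : ℝ} (hR : 0 < R) {K : NNReal}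
    (hgc : Continuous g) (hFcont : Continuous Fc)
    (hK : LipschitzOnWith K g (Metric.closedBall 0 R))
    (hgb : ∀ p : Fin n → ℝ, ‖p‖ ≤ R → ‖g p‖ ≤ lam * R / 4)
    (hFb : ∀ t : ℝ, ‖Fc t‖ ≤ lam * R / 4)
    (x₀ : Fin n → ℝ) (hx₀ : ‖x₀‖ ≤ R / 2) :
    ∃ x : ℝ → (Fin n → ℝ), x 0 = x₀ ∧ ContinuousOn x (Ici 0) ∧
      (∀ t ≥ (0:ℝ), HasDerivWithinAt x
        ((fun i => -(Λ i * x t i)) + (g (x t) + Fc t)) (Ici t) t) ∧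
      (∀ t > (0:ℝ), HasDerivAt x
        ((fun i => -(Λ i * x t i)) + (g (x t) + Fc t)) t) ∧
      (∀ t ≥ (0:ℝ), ‖x t‖ ≤ R / 2) := by
  classical
  set V : ℝ → (Fin n → ℝ) → (Fin n → ℝ) :=
    fun t p => (fun i => -(Λ i * p i)) + (g p + Fc t) with hV
  set K' : NNReal := ‖Λ‖₊ + K with hK'
  -- global Lipschitz property of V on the ball of radius R
  have hVlip : ∀ t : ℝ, LipschitzOnWith K' (V t) (Metric.closedBall 0 R) := by
    intro t
    have h1 : LipschitzOnWith ‖Λ‖₊ (fun p : Fin n → ℝ => (fun i => -(Λ i * p i)))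
        (Metric.closedBall 0 R) := (lin_part_lipschitz Λ).lipschitzOnWith
    have h2 : LipschitzOnWith K (fun p => g p + Fc t) (Metric.closedBall 0 R) := by
      rw [lipschitzOnWith_iff_dist_le_mul] at hK ⊢
      intro p hp q hq
      simpa [dist_eq_norm, add_sub_add_right_eq_sub] using hK p hp q hq
    rw [hK']
    exact h1.add h2
  -- bound on V
  set Cv : ℝ := ‖Λ‖ * R + lam * R / 2 with hCv
  have hCvpos : 0 < Cv := by
    have : (0:ℝ) ≤ ‖Λ‖ * R := by positivity
    rw [hCv]; nlinarith
  have hVb : ∀ t : ℝ, ∀ p : Fin n → ℝ, ‖p‖ ≤ R → ‖V t p‖ ≤ Cv := by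
    intro t p hp
    have h1 : ‖(fun i => -(Λ i * p i) : Fin n → ℝ)‖ ≤ ‖Λ‖ * ‖p‖ := by
      have hnn : (0:ℝ) ≤ ‖Λ‖ * ‖p‖ := by positivity
      rw [pi_norm_le_iff_of_nonneg hnn]
      intro i
      show ‖-(Λ i * p i)‖ ≤ _
      rw [norm_neg, norm_mul]
      exact mul_le_mul (norm_le_pi_norm Λ i) (norm_le_pi_norm p i) (norm_nonneg _) (norm_nonneg _)
    calc ‖V t p‖ ≤ ‖(fun i => -(Λ i * p i) : Fin n → ℝ)‖ + (‖g p‖ + ‖Fc t‖) := by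
          rw [hV]
          refine (norm_add_le _ _).trans ?_
          gcongr
          exact norm_add_le _ _
      _ ≤ ‖Λ‖ * R + (lam * R / 4 + lam * R / 4) := by
          gcongr
          · refine h1.trans ?_
            have : (0:ℝ) ≤ ‖Λ‖ := norm_nonneg _
            nlinarith
          · exact hgb p hp
          · exact hFb t
      _ = Cv := by rw [hCv]; ring
  have hVcont : ∀ p : Fin n → ℝ, Continuous (fun t => V t p) := by
    intro p
    rw [hV]
    exact continuous_const.add (continuous_const.add hFcont)
  set hstep : ℝ := (R / 2) / Cv with hhstep
  have hsteppos : 0 < hstep := by positivity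
  -- one Picard-Lindelöf step
  have PLstep : ∀ (a : ℝ) (q : Fin n → ℝ), ‖q‖ ≤ R / 2 →
      ∃ w : ℝ → (Fin n → ℝ), w a = q ∧
        ∀ t ∈ Icc a (a + hstep), HasDerivWithinAt w (V t (w t)) (Icc a (a + hstep)) t := by
    intro a q hq
    have hsub : Metric.closedBall q (R / 2) ⊆ Metric.closedBall 0 R := by
      intro p hp
      rw [Metric.mem_closedBall, dist_zero_right]
      rw [Metric.mem_closedBall] at hp
      calc ‖p‖ = ‖p - q + q‖ := by ring_nf
        _ ≤ ‖p - q‖ + ‖q‖ := norm_add_le _ _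
        _ ≤ R / 2 + R / 2 := by
            refine add_le_add ?_ hq
            rw [← dist_eq_norm]; exact hp
        _ = R := by ring
    have hR2 : ((R / 2).toNNReal : ℝ) = R / 2 := Real.coe_toNNReal _ (by positivity)
    have hCv' : (Cv.toNNReal : ℝ) = Cv := Real.coe_toNNReal _ hCvpos.le
    have hpl : IsPicardLindelof V (tmin := a) (tmax := a + hstep) ⟨a, le_rfl, by linarith⟩ q
        (R / 2).toNNReal 0 Cv.toNNReal K' := by
      constructor
      · intro t _
        rw [hR2]
        exact (hVlip t).mono hsub
      · intro p hp
        exact (hVcont p).continuousOn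
      · intro t _ p hp
        rw [hCv']
        apply hVb
        rw [hR2] at hp
        have := hsub hp
        rwa [Metric.mem_closedBall, dist_zero_right] at this
      · rw [hCv', hR2, NNReal.coe_zero, sub_zero]
        dsimp only
        have : max (a + hstep - a) (a - a) = hstep := by
          rw [show a + hstep - a = hstep by ring, show a - a = 0 by ring]
          exact max_eq_left hsteppos.le
        rw [this]
        have heq : Cv * hstep = R / 2 := by
          rw [hhstep]; field_simp
        rw [heq]
    exact hpl.exists_eq_forall_mem_Icc_hasDerivWithinAt₀
  -- iterate the steps
  have main : ∀ k : ℕ, ∃ x : ℝ → (Fin n → ℝ), x 0 = x₀ ∧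
      ∀ t ∈ Icc (0:ℝ) ((k+1) * hstep),
        HasDerivWithinAt x (V t (x t)) (Icc (0:ℝ) ((k+1) * hstep)) t := by
    intro k
    induction k with
    | zero =>
      obtain ⟨w, hw0, hwd⟩ := PLstep 0 x₀ hx₀
      refine ⟨w, hw0, ?_⟩
      simpa using hwd
    | succ k ih =>
      obtain ⟨x, hx0, hxd⟩ := ih
      set Tk : ℝ := (k+1) * hstep with hTk
      have hTkpos : 0 < Tk := by positivity
      have hxc : ContinuousOn x (Icc 0 Tk) :=
        fun t ht => (hxd t ht).continuousWithinAt
      have hxdIci : ∀ t ∈ Ico (0:ℝ) Tk, HasDerivWithinAt x (V t (x t)) (Ici t) t := by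
        intro t ht
        apply (hxd t ⟨ht.1, ht.2.le⟩).mono_of_mem_nhdsWithin
        rw [mem_nhdsWithin]
        exact ⟨Iio Tk, isOpen_Iio, ht.2, fun s hs => ⟨le_trans ht.1 hs.2, hs.1.le⟩⟩
      have hbound : ∀ t ∈ Icc (0:ℝ) Tk, ‖x t‖ ≤ R / 2 := by
        apply apriori_bound hlam hΛl hR hgc hFcont hgb hFb hTkpos.le hxc hxdIci
        rw [hx0]; exact hx₀
      set q : Fin n → ℝ := x Tk with hq
      have hqb : ‖q‖ ≤ R / 2 := hbound Tk ⟨hTkpos.le, le_rfl⟩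
      obtain ⟨w, hw0, hwd⟩ := PLstep Tk q hqb
      set x' : ℝ → (Fin n → ℝ) := fun t => if t ≤ Tk then x t else w t with hx'
      have hx'eqx : ∀ s ∈ Icc (0:ℝ) Tk, x' s = x s := fun s hs => if_pos hs.2
      have hx'eqw : ∀ s ∈ Icc Tk (Tk + hstep), x' s = w s := by
        intro s hs
        rcases eq_or_lt_of_le hs.1 with heq | hlt
        · rw [hx']; simp only [← heq, if_pos le_rfl, hw0, hq]
        · exact if_neg (not_le.mpr hlt)
      have hdom : ((k:ℝ)+1+1) * hstep = Tk + hstep := by rw [hTk]; ring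
      refine ⟨x', by rw [hx'eqx 0 ⟨le_rfl, hTkpos.le⟩, hx0], ?_⟩
      intro t ht
      push_cast at ht ⊢
      rw [hdom] at ht ⊢
      have hunion : Icc (0:ℝ) Tk ∪ Icc Tk (Tk + hstep) = Icc 0 (Tk + hstep) :=
        Icc_union_Icc_eq_Icc hTkpos.le (by linarith)
      rcases lt_trichotomy t Tk with hlt | heq | hgt
      · have h1 : HasDerivWithinAt x' (V t (x' t)) (Icc 0 Tk) t := by
          rw [hx'eqx t ⟨ht.1, hlt.le⟩]
          exact (hxd t ⟨ht.1, hlt.le⟩).congr hx'eqx (hx'eqx t ⟨ht.1, hlt.le⟩)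
        apply h1.mono_of_mem_nhdsWithin
        rw [mem_nhdsWithin]
        exact ⟨Iio Tk, isOpen_Iio, hlt, fun s hs => ⟨hs.2.1, hs.1.le⟩⟩
      · rw [heq]
        have e : x' Tk = x Tk := hx'eqx Tk ⟨hTkpos.le, le_rfl⟩
        have e2 : x' Tk = w Tk := hx'eqw Tk ⟨le_rfl, by linarith⟩
        have h1 : HasDerivWithinAt x' (V Tk (x' Tk)) (Icc 0 Tk) Tk := by
          have h1' := (hxd Tk ⟨hTkpos.le, le_rfl⟩).congr hx'eqx e
          rwa [← e] at h1'
        have h2 : HasDerivWithinAt x' (V Tk (x' Tk)) (Icc Tk (Tk + hstep)) Tk := by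
          have h3 := hwd Tk ⟨le_rfl, by linarith⟩
          have h4 := h3.congr hx'eqw e2
          rwa [← e2] at h4
        have := h1.union h2
        rwa [Icc_union_Icc_eq_Icc hTkpos.le (by linarith)] at this
      · have h1 : HasDerivWithinAt x' (V t (x' t)) (Icc Tk (Tk + hstep)) t := by
          rw [hx'eqw t ⟨hgt.le, ht.2⟩]
          exact (hwd t ⟨hgt.le, ht.2⟩).congr hx'eqw (hx'eqw t ⟨hgt.le, ht.2⟩)
        apply h1.mono_of_mem_nhdsWithin
        rw [mem_nhdsWithin]
        exact ⟨Ioi Tk, isOpen_Ioi, hgt, fun s hs => ⟨hs.1.le, hs.2.2⟩⟩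
  choose X hX0 hXd using main
  -- continuity and restricted derivatives for each X k
  have hXc : ∀ k, ContinuousOn (X k) (Icc 0 ((k+1) * hstep)) :=
    fun k t ht => (hXd k t ht).continuousWithinAt
  have hXdIci : ∀ (k : ℕ), ∀ t ∈ Ico (0:ℝ) (((k:ℝ)+1) * hstep),
      HasDerivWithinAt (X k) (V t (X k t)) (Ici t) t := by
    intro k t ht
    apply (hXd k t ⟨ht.1, ht.2.le⟩).mono_of_mem_nhdsWithin
    rw [mem_nhdsWithin]
    exact ⟨Iio (((k:ℝ)+1) * hstep), isOpen_Iio, ht.2, fun s hs => ⟨le_trans ht.1 hs.2, hs.1.le⟩⟩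
  have hXbound : ∀ (k : ℕ), ∀ t ∈ Icc (0:ℝ) (((k:ℝ)+1) * hstep), ‖X k t‖ ≤ R / 2 := by
    intro k
    apply apriori_bound hlam hΛl hR hgc hFcont hgb hFb (by positivity) (hXc k) (hXdIci k)
    rw [hX0 k]; exact hx₀
  -- compatibility
  have compat' : ∀ j k : ℕ, j ≤ k → ∀ t ∈ Icc (0:ℝ) ((j+1) * hstep), X j t = X k t := by
    intro j k hjk t ht
    have hsub : ((j:ℝ)+1) * hstep ≤ ((k:ℝ)+1) * hstep := by
      apply mul_le_mul_of_nonneg_right _ hsteppos.le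
      have : (j:ℝ) ≤ k := Nat.cast_le.mpr hjk
      linarith
    have := ODE_solution_unique_of_mem_Icc_right (v := V)
      (s := fun _ => Metric.closedBall 0 R) (K := K') (fun t _ => hVlip t)
      (hXc j)
      (fun t ht => hXdIci j t ht)
      (fun t ht => by
        rw [Metric.mem_closedBall, dist_zero_right]
        exact le_trans (hXbound j t ⟨ht.1, ht.2.le⟩) (by linarith))
      ((hXc k).mono (Icc_subset_Icc_right hsub))
      (fun t ht => hXdIci k t ⟨ht.1, lt_of_lt_of_le ht.2 hsub⟩)
      (fun t ht => by
        rw [Metric.mem_closedBall, dist_zero_right]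
        refine le_trans (hXbound k t ⟨ht.1, le_trans ht.2.le hsub⟩) (by linarith))
      (by rw [hX0 j, hX0 k])
    exact this ht
  -- the global solution
  set idx : ℝ → ℕ := fun t => Nat.ceil (t / hstep) + 1 with hidx
  have hidx_mem : ∀ t : ℝ, 0 ≤ t → t ∈ Icc (0:ℝ) ((idx t + 1) * hstep) := by
    intro t ht
    refine ⟨ht, ?_⟩
    have h1 : t / hstep ≤ Nat.ceil (t / hstep) := Nat.le_ceil _
    have h2 : t ≤ (Nat.ceil (t / hstep) : ℝ) * hstep := by
      rw [div_le_iff₀ hsteppos] at h1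
      exact h1
    have h3 : ((Nat.ceil (t / hstep) : ℝ)) * hstep ≤ ((idx t : ℝ) + 1) * hstep := by
      apply mul_le_mul_of_nonneg_right _ hsteppos.le
      rw [hidx]
      push_cast
      linarith
    linarith
  set xx : ℝ → (Fin n → ℝ) := fun t => X (idx t) t with hxx
  have agree : ∀ (k : ℕ) (s : ℝ), s ∈ Icc (0:ℝ) ((k+1) * hstep) → xx s = X k s := by
    intro k s hs
    rw [hxx]
    rcases le_total (idx s) k with hjk | hjk
    · exact compat' (idx s) k hjk s (hidx_mem s hs.1)
    · exact (compat' k (idx s) hjk s hs).symm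
  have hxx0 : xx 0 = x₀ := by
    rw [agree 0 0 ⟨le_rfl, by positivity⟩, hX0]
  have hinterior : ∀ t : ℝ, 0 ≤ t → t < ((idx t : ℝ) + 1) * hstep := by
    intro t ht
    have h1 : t / hstep ≤ Nat.ceil (t / hstep) := Nat.le_ceil _
    have h2 : t ≤ (Nat.ceil (t / hstep) : ℝ) * hstep := by
      rw [div_le_iff₀ hsteppos] at h1; exact h1
    have : ((Nat.ceil (t / hstep) : ℝ)) * hstep < ((idx t : ℝ) + 1) * hstep := by
      apply mul_lt_mul_of_pos_right _ hsteppos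
      rw [hidx]; push_cast; linarith
    linarith
  have hxxc : ContinuousOn xx (Ici 0) := by
    intro t ht
    set k := idx t with hk
    have hmem : Icc (0:ℝ) ((k+1) * hstep) ∈ 𝓝[Ici 0] t := by
      rw [mem_nhdsWithin]
      exact ⟨Iio ((k+1) * hstep), isOpen_Iio, hinterior t ht, fun s hs => ⟨hs.2, hs.1.le⟩⟩
    have h1 : ContinuousWithinAt (X k) (Ici 0) t :=
      ((hXc k) t (hidx_mem t ht)).mono_of_mem_nhdsWithin hmem
    apply h1.congr_of_eventuallyEq _ (agree k t (hidx_mem t ht))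
    filter_upwards [hmem] with s hs
    exact agree k s hs
  have hxd' : ∀ t ≥ (0:ℝ), HasDerivWithinAt xx (V t (xx t)) (Icc 0 ((idx t + 1) * hstep)) t := by
    intro t ht
    set k := idx t with hk
    have h1 := (hXd k t (hidx_mem t ht)).congr
      (fun s hs => agree k s hs) (agree k t (hidx_mem t ht))
    rwa [agree k t (hidx_mem t ht)]
  have hxxdIci : ∀ t ≥ (0:ℝ), HasDerivWithinAt xx (V t (xx t)) (Ici t) t := by
    intro t ht
    apply (hxd' t ht).mono_of_mem_nhdsWithin
    rw [mem_nhdsWithin]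
    exact ⟨Iio ((idx t + 1) * hstep), isOpen_Iio, hinterior t ht,
      fun s hs => ⟨le_trans ht hs.2, hs.1.le⟩⟩
  have hxxdAt : ∀ t > (0:ℝ), HasDerivAt xx (V t (xx t)) t := by
    intro t ht
    apply (hxd' t ht.le).hasDerivAt
    exact Icc_mem_nhds ht (hinterior t ht.le)
  have hxxb : ∀ t ≥ (0:ℝ), ‖xx t‖ ≤ R / 2 := by
    intro t ht
    rw [agree (idx t) t (hidx_mem t ht)]
    exact hXbound (idx t) t (hidx_mem t ht)
  exact ⟨xx, hxx0, hxxc, hxxdIci, hxxdAt, hxxb⟩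

lemma mulVec_norm_bound {n : ℕ} (M : Matrix (Fin n) (Fin n) ℝ) :
    ∃ c : ℝ, 0 < c ∧ ∀ v : Fin n → ℝ, ‖M.mulVec v‖ ≤ c * ‖v‖ := by
  set L := LinearMap.toContinuousLinearMap (Matrix.mulVecLin M) with hL
  refine ⟨‖L‖ + 1, by positivity, fun v => ?_⟩
  have h1 : M.mulVec v = L v := by simp [hL]
  rw [h1]
  calc ‖L v‖ ≤ ‖L‖ * ‖v‖ := L.le_opNorm v
    _ ≤ (‖L‖ + 1) * ‖v‖ := by
        apply mul_le_mul_of_nonneg_right _ (norm_nonneg _)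
        linarith

lemma lipschitzOnWith_of_dist_le {α : Type*} [PseudoMetricSpace α] {f : α → α} {s : Set α}
    {c : ℝ} (hc : 0 ≤ c)
    (h : ∀ p ∈ s, ∀ q ∈ s, dist (f p) (f q) ≤ c * dist p q) :
    LipschitzOnWith c.toNNReal f s := by
  rw [lipschitzOnWith_iff_dist_le_mul]
  intro p hp q hq
  rw [Real.coe_toNNReal c hc]
  exact h p hp q hq



/-- Theorem 3.1: small-data global existence, uniqueness and decay for
`y' = -Ay + G(y) + f(t)` with `A` diagonalizable with positive eigenvalues and
`G` locally Lipschitz with quadratic bound near the origin. -/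
theorem stmt12 (n : ℕ) (hn : 0 < n)
    (S : Matrix (Fin n) (Fin n) ℝ) (hS : IsUnit S)
    (Λ : Fin n → ℝ) (hΛ : ∀ i, 0 < Λ i)
    (A : Matrix (Fin n) (Fin n) ℝ) (hA : A = S⁻¹ * Matrix.diagonal Λ * S)
    (G : (Fin n → ℝ) → (Fin n → ℝ)) (hG : LocallyLipschitz G)
    (cstar rstar : ℝ) (hc : 0 < cstar) (hr : 0 < rstar)
    (hGq : ∀ v : Fin n → ℝ, ‖v‖ < rstar → ‖G v‖ ≤ cstar * ‖v‖ ^ 2) :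
    ∃ ε₀ > (0:ℝ), ∃ ε₁ > (0:ℝ), ∀ (y₀ : Fin n → ℝ) (f : ℝ → Fin n → ℝ),
      ‖y₀‖ < ε₀ → ContinuousOn f (Set.Ici 0) →
      (∃ b < ε₁, ∀ t ≥ (0:ℝ), ‖f t‖ ≤ b) →
      ∃ y : ℝ → Fin n → ℝ, y 0 = y₀ ∧
        (∀ t ≥ (0:ℝ), HasDerivAt y (-(A.mulVec (y t)) + G (y t) + f t) t) ∧
        (∀ z : ℝ → Fin n → ℝ, z 0 = y₀ →
          (∀ t ≥ (0:ℝ), HasDerivAt z (-(A.mulVec (z t)) + G (z t) + f t) t) →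
          ∀ t ≥ (0:ℝ), z t = y t) ∧
        (Filter.Tendsto f Filter.atTop (nhds 0) →
          Filter.Tendsto y Filter.atTop (nhds 0)) := by
  classical
  haveI : NeZero n := ⟨hn.ne'⟩
  -- smallest eigenvalue
  have huniv : (Finset.univ : Finset (Fin n)).Nonempty := Finset.univ_nonempty
  set lam : ℝ := Finset.univ.inf' huniv Λ with hlamdef
  have hlam : 0 < lam := by
    rw [hlamdef, Finset.lt_inf'_iff]
    exact fun i _ => hΛ i
  have hΛl : ∀ i, lam ≤ Λ i := fun i => Finset.inf'_le Λ (Finset.mem_univ i)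
  -- matrix inverse facts
  have hdet : IsUnit S.det := (Matrix.isUnit_iff_isUnit_det S).mp hS
  have hSS' : S * S⁻¹ = 1 := Matrix.mul_nonsing_inv S hdet
  have hS'S : S⁻¹ * S = 1 := Matrix.nonsing_inv_mul S hdet
  -- norm bounds for mulVec
  obtain ⟨cS, hcS, hcSb⟩ := mulVec_norm_bound S
  obtain ⟨cT, hcT, hcTb⟩ := mulVec_norm_bound S⁻¹
  -- the transformed nonlinearity
  set g : (Fin n → ℝ) → (Fin n → ℝ) := fun p => S.mulVec (G (S⁻¹.mulVec p)) with hgdef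
  have hgc : Continuous g := by
    have h1 : Continuous fun p : Fin n → ℝ => S⁻¹.mulVec p :=
      (LinearMap.toContinuousLinearMap (Matrix.mulVecLin S⁻¹)).continuous
    have h2 : Continuous fun p : Fin n → ℝ => S.mulVec p :=
      (LinearMap.toContinuousLinearMap (Matrix.mulVecLin S)).continuous
    exact h2.comp (hG.continuous.comp h1)
  -- local Lipschitz bound for g near 0
  obtain ⟨K₀, u, hu, hKu⟩ := hG 0
  obtain ⟨ρ, hρ, hball⟩ := Metric.mem_nhds_iff.mp hu
  set r₁ : ℝ := (ρ / 2) / cT with hr₁def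
  have hr₁ : 0 < r₁ := by positivity
  have hglip : LipschitzOnWith (cS * (K₀:ℝ) * cT).toNNReal g (Metric.closedBall 0 r₁) := by
    apply lipschitzOnWith_of_dist_le (by positivity)
    intro p hp q hq
    have hmem : ∀ w : Fin n → ℝ, w ∈ Metric.closedBall (0 : Fin n → ℝ) r₁ →
        S⁻¹.mulVec w ∈ u := by
      intro w hw
      apply hball
      rw [Metric.mem_ball, dist_zero_right]
      rw [Metric.mem_closedBall, dist_zero_right] at hw
      calc ‖S⁻¹.mulVec w‖ ≤ cT * ‖w‖ := hcTb w
        _ ≤ cT * r₁ := mul_le_mul_of_nonneg_left hw hcT.le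
        _ = ρ / 2 := by rw [hr₁def]; field_simp
        _ < ρ := by linarith
    rw [hgdef]
    simp only [dist_eq_norm]
    calc ‖S.mulVec (G (S⁻¹.mulVec p)) - S.mulVec (G (S⁻¹.mulVec q))‖
        = ‖S.mulVec (G (S⁻¹.mulVec p) - G (S⁻¹.mulVec q))‖ := by
          rw [Matrix.mulVec_sub]
      _ ≤ cS * ‖G (S⁻¹.mulVec p) - G (S⁻¹.mulVec q)‖ := hcSb _
      _ ≤ cS * ((K₀:ℝ) * ‖S⁻¹.mulVec p - S⁻¹.mulVec q‖) := by
          apply mul_le_mul_of_nonneg_left _ hcS.le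
          have := hKu.dist_le_mul _ (hmem p hp) _ (hmem q hq)
          rwa [dist_eq_norm, dist_eq_norm] at this
      _ ≤ cS * ((K₀:ℝ) * (cT * ‖p - q‖)) := by
          apply mul_le_mul_of_nonneg_left _ hcS.le
          apply mul_le_mul_of_nonneg_left _ K₀.coe_nonneg
          rw [← Matrix.mulVec_sub]
          exact hcTb _
      _ = cS * (K₀:ℝ) * cT * ‖p - q‖ := by ring
  -- quadratic bound for g
  set c₂ : ℝ := cS * cstar * cT ^ 2 with hc₂def
  have hc₂ : 0 < c₂ := by positivity
  set r₂ : ℝ := min r₁ (rstar / (2 * cT)) with hr₂def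
  have hr₂ : 0 < r₂ := lt_min hr₁ (by positivity)
  have hgq : ∀ p : Fin n → ℝ, ‖p‖ ≤ r₂ → ‖g p‖ ≤ c₂ * ‖p‖ ^ 2 := by
    intro p hp
    have h1 : ‖S⁻¹.mulVec p‖ < rstar := by
      calc ‖S⁻¹.mulVec p‖ ≤ cT * ‖p‖ := hcTb p
        _ ≤ cT * (rstar / (2 * cT)) :=
            mul_le_mul_of_nonneg_left (le_trans hp (min_le_right _ _)) hcT.le
        _ = rstar / 2 := by field_simp
        _ < rstar := by linarith
    rw [hgdef]
    calc ‖S.mulVec (G (S⁻¹.mulVec p))‖ ≤ cS * ‖G (S⁻¹.mulVec p)‖ := hcSb _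
      _ ≤ cS * (cstar * ‖S⁻¹.mulVec p‖ ^ 2) :=
          mul_le_mul_of_nonneg_left (hGq _ h1) hcS.le
      _ ≤ cS * (cstar * (cT * ‖p‖) ^ 2) := by
          apply mul_le_mul_of_nonneg_left _ hcS.le
          apply mul_le_mul_of_nonneg_left _ hc.le
          apply pow_le_pow_left₀ (norm_nonneg _) (hcTb p)
      _ = c₂ * ‖p‖ ^ 2 := by rw [hc₂def]; ring
  -- choice of R, ε₀, ε₁
  set R : ℝ := min r₂ (lam / (4 * c₂)) with hRdef
  have hR : 0 < R := lt_min hr₂ (by positivity)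
  have hRr₂ : R ≤ r₂ := min_le_left _ _
  have hRr₁ : R ≤ r₁ := le_trans hRr₂ (min_le_left _ _)
  have hc₂R : c₂ * R ≤ lam / 4 := by
    have h1 : R ≤ lam / (4 * c₂) := min_le_right _ _
    calc c₂ * R ≤ c₂ * (lam / (4 * c₂)) := mul_le_mul_of_nonneg_left h1 hc₂.le
      _ = lam / 4 := by field_simp
  have hgb : ∀ p : Fin n → ℝ, ‖p‖ ≤ R → ‖g p‖ ≤ lam * R / 4 := by
    intro p hp
    calc ‖g p‖ ≤ c₂ * ‖p‖ ^ 2 := hgq p (le_trans hp hRr₂)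
      _ ≤ c₂ * R ^ 2 := by
          apply mul_le_mul_of_nonneg_left _ hc₂.le
          apply pow_le_pow_left₀ (norm_nonneg _) hp
      _ = (c₂ * R) * R := by ring
      _ ≤ (lam / 4) * R := mul_le_mul_of_nonneg_right hc₂R hR.le
      _ = lam * R / 4 := by ring
  refine ⟨R / (2 * cS), by positivity, lam * R / (4 * cS), by positivity, ?_⟩
  intro y₀ f hy₀ hfc hfb
  obtain ⟨b, hbε, hfb⟩ := hfb
  have hb0 : 0 ≤ b := le_trans (norm_nonneg (f 0)) (hfb 0 le_rfl)
  -- extension of f and transformed forcing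
  set fext : ℝ → (Fin n → ℝ) := fun t => f (max t 0) with hfext
  have hfextc : Continuous fext := by
    apply hfc.comp_continuous (continuous_id.max continuous_const)
    intro t
    exact le_max_right t 0
  have hfext_eq : ∀ t : ℝ, 0 ≤ t → fext t = f t := by
    intro t ht
    rw [hfext]
    simp [max_eq_left ht]
  set Fc : ℝ → (Fin n → ℝ) := fun t => S.mulVec (fext t) with hFcdef
  have hFcont : Continuous Fc :=
    (LinearMap.toContinuousLinearMap (Matrix.mulVecLin S)).continuous.comp hfextc
  have hFb : ∀ t : ℝ, ‖Fc t‖ ≤ lam * R / 4 := by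
    intro t
    calc ‖Fc t‖ ≤ cS * ‖fext t‖ := hcSb _
      _ ≤ cS * b := by
          apply mul_le_mul_of_nonneg_left _ hcS.le
          exact hfb (max t 0) (le_max_right _ _)
      _ ≤ cS * (lam * R / (4 * cS)) := by
          apply mul_le_mul_of_nonneg_left hbε.le hcS.le
      _ = lam * R / 4 := by field_simp
  -- initial data in x coordinates
  set x₀ : Fin n → ℝ := S.mulVec y₀ with hx₀def
  have hx₀ : ‖x₀‖ ≤ R / 2 := by
    calc ‖x₀‖ ≤ cS * ‖y₀‖ := hcSb _
      _ ≤ cS * (R / (2 * cS)) := mul_le_mul_of_nonneg_left hy₀.le hcS.le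
      _ = R / 2 := by field_simp
  -- global solution in x coordinates
  obtain ⟨x, hx0, hxc, hxdIci, hxdAt, hxb⟩ := exists_global_sol hlam hΛl hR hgc hFcont
    (hglip.mono (Metric.closedBall_subset_closedBall hRr₁)) hgb hFb x₀ hx₀
  -- the continuous linear map back
  set L : (Fin n → ℝ) →L[ℝ] (Fin n → ℝ) :=
    LinearMap.toContinuousLinearMap (Matrix.mulVecLin S⁻¹) with hLdef
  have hLapp : ∀ w, L w = S⁻¹.mulVec w := by intro w; simp [hLdef]
  -- key algebraic identity
  have hkey : ∀ (t : ℝ) (p : Fin n → ℝ),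
      S⁻¹.mulVec ((fun i => -(Λ i * p i)) + (g p + Fc t))
        = -(A.mulVec (S⁻¹.mulVec p)) + G (S⁻¹.mulVec p) + fext t := by
    intro t p
    have hdiag : (fun i => -(Λ i * p i)) = -((Matrix.diagonal Λ).mulVec p) := by
      funext i
      simp [Matrix.mulVec_diagonal]
    rw [hdiag, Matrix.mulVec_add, Matrix.mulVec_add, Matrix.mulVec_neg]
    have h1 : S⁻¹.mulVec ((Matrix.diagonal Λ).mulVec p) = A.mulVec (S⁻¹.mulVec p) := by
      rw [Matrix.mulVec_mulVec, Matrix.mulVec_mulVec, hA]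
      congr 1
      rw [Matrix.mul_assoc (S⁻¹ * Matrix.diagonal Λ) S S⁻¹, hSS',
        Matrix.mul_one]
    have h2 : S⁻¹.mulVec (g p) = G (S⁻¹.mulVec p) := by
      rw [hgdef, Matrix.mulVec_mulVec, hS'S, Matrix.one_mulVec]
    have h3 : S⁻¹.mulVec (Fc t) = fext t := by
      rw [hFcdef, Matrix.mulVec_mulVec, hS'S, Matrix.one_mulVec]
    rw [h1, h2, h3]
    abel
  have hLx₀ : S⁻¹.mulVec x₀ = y₀ := by
    rw [hx₀def, Matrix.mulVec_mulVec, hS'S, Matrix.one_mulVec]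
  -- definition of y
  set v₀ : Fin n → ℝ := -(A.mulVec y₀) + G y₀ + f 0 with hv₀def
  set y : ℝ → (Fin n → ℝ) := fun t => if 0 ≤ t then S⁻¹.mulVec (x t) else y₀ + t • v₀
    with hydef
  have hy_eq : ∀ t : ℝ, 0 ≤ t → y t = S⁻¹.mulVec (x t) := fun t ht => if_pos ht
  have hy0 : y 0 = y₀ := by rw [hy_eq 0 le_rfl, hx0, hLx₀]
  -- the equation for y
  have hval : ∀ t : ℝ, 0 ≤ t →
      L ((fun i => -(Λ i * x t i)) + (g (x t) + Fc t))
        = -(A.mulVec (y t)) + G (y t) + f t := by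
    intro t ht
    rw [hLapp, hkey t (x t), hy_eq t ht, hfext_eq t ht]
  have hyeq : ∀ t ≥ (0:ℝ), HasDerivAt y (-(A.mulVec (y t)) + G (y t) + f t) t := by
    intro t ht
    rcases eq_or_lt_of_le ht with heq | hpos
    · -- t = 0
      subst heq
      have hr := hxdIci 0 le_rfl
      have hr2 : HasDerivWithinAt (fun s => L (x s))
          (L ((fun i => -(Λ i * x 0 i)) + (g (x 0) + Fc 0))) (Ici 0) 0 :=
        L.hasFDerivAt.comp_hasDerivWithinAt 0 hr
      have hr3 : HasDerivWithinAt y (-(A.mulVec (y 0)) + G (y 0) + f 0) (Ici 0) 0 := by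
        rw [← hval 0 le_rfl]
        exact hr2.congr (fun s hs => by rw [hy_eq s hs, hLapp])
          (by rw [hy_eq 0 le_rfl, hLapp])
      have hv₀y : v₀ = -(A.mulVec (y 0)) + G (y 0) + f 0 := by rw [hy0, hv₀def]
      have hl : HasDerivAt (fun s : ℝ => y₀ + s • v₀) v₀ 0 := by
        have h1 := (hasDerivAt_id (0:ℝ)).smul_const v₀
        have h2 := h1.const_add y₀
        simpa using h2
      have hl2 : HasDerivWithinAt y (-(A.mulVec (y 0)) + G (y 0) + f 0) (Iic 0) 0 := by
        rw [← hv₀y]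
        apply hl.hasDerivWithinAt.congr
        · intro s hs
          have hs' : s ≤ 0 := hs
          rcases eq_or_lt_of_le hs' with h0 | h0
          · rw [h0, hy0]; simp
          · simp only [hydef]
            rw [if_neg (not_le.mpr h0)]
        · rw [hy0]; simp
      have := hl2.union hr3
      rwa [Iic_union_Ici, hasDerivWithinAt_univ] at this
    · -- t > 0
      have h1 := hxdAt t hpos
      have h2 : HasDerivAt (fun s => L (x s))
          (L ((fun i => -(Λ i * x t i)) + (g (x t) + Fc t))) t :=
        L.hasFDerivAt.comp_hasDerivAt t h1
      have h3 : HasDerivAt y (-(A.mulVec (y t)) + G (y t) + f t) t := by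
        rw [← hval t ht]
        apply h2.congr_of_eventuallyEq
        filter_upwards [(isOpen_Ioi).mem_nhds hpos] with s hs
        rw [hy_eq s (le_of_lt hs), hLapp]
      exact h3
  refine ⟨y, hy0, hyeq, ?_, ?_⟩
  · -- uniqueness
    intro z hz0 hzd
    have hzc : ∀ t ≥ (0:ℝ), ContinuousAt z t := fun t ht => (hzd t ht).continuousAt
    have hyc : ∀ t ≥ (0:ℝ), ContinuousAt y t := fun t ht => (hyeq t ht).continuousAt
    by_contra hcon
    push_neg at hcon
    obtain ⟨t₁, ht₁, hzy₁⟩ := hcon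
    set Bad : Set ℝ := {t : ℝ | 0 ≤ t ∧ z t ≠ y t} with hBaddef
    have hne : Bad.Nonempty := ⟨t₁, ht₁, hzy₁⟩
    have hbdd : BddBelow Bad := ⟨0, fun t ht => ht.1⟩
    set τ := sInf Bad with hτdef
    have hτ0 : 0 ≤ τ := le_csInf hne (fun t ht => ht.1)
    have heq_before : ∀ s, 0 ≤ s → s < τ → z s = y s := by
      intro s hs0 hsτ
      by_contra hne2
      exact absurd (csInf_le hbdd ⟨hs0, hne2⟩) (not_le.mpr hsτ)
    have hzyτ : z τ = y τ := by
      rcases eq_or_lt_of_le hτ0 with h0 | h0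
      · rw [← h0, hz0, hy0]
      · have hne2 : (𝓝[Ico 0 τ] τ).NeBot := by
          rw [← mem_closure_iff_nhdsWithin_neBot, closure_Ico h0.ne]
          exact ⟨hτ0, le_rfl⟩
        have h1 : Tendsto (fun s => z s - y s) (𝓝[Ico 0 τ] τ) (𝓝 (z τ - y τ)) :=
          (((hzc τ hτ0).sub (hyc τ hτ0)).tendsto).mono_left nhdsWithin_le_nhds
        have h2 : Tendsto (fun s => z s - y s) (𝓝[Ico 0 τ] τ) (𝓝 0) := by
          apply Filter.Tendsto.congr' _ tendsto_const_nhds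
          filter_upwards [self_mem_nhdsWithin] with s hs
          rw [heq_before s hs.1 hs.2, sub_self]
        have := tendsto_nhds_unique h1 h2
        have := sub_eq_zero.mp this
        exact this
    -- local Lipschitz setup around y τ
    obtain ⟨K₁, u₁, hu₁, hKu₁⟩ := hG (y τ)
    obtain ⟨ρ₁, hρ₁, hball₁⟩ := Metric.mem_nhds_iff.mp hu₁
    obtain ⟨cA, hcA, hcAb⟩ := mulVec_norm_bound A
    set W : ℝ → (Fin n → ℝ) → (Fin n → ℝ) :=
      fun t p => -(A.mulVec p) + G p + fext t with hWdef
    have hWlip : ∀ t : ℝ, LipschitzOnWith (cA + (K₁:ℝ)).toNNReal (W t)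
        (Metric.ball (y τ) ρ₁) := by
      intro t
      apply lipschitzOnWith_of_dist_le (by positivity)
      intro p hp q hq
      have e : W t p - W t q = (G p - G q) - A.mulVec (p - q) := by
        rw [hWdef]
        simp only []
        rw [Matrix.mulVec_sub]
        abel
      rw [dist_eq_norm, dist_eq_norm, e]
      calc ‖(G p - G q) - A.mulVec (p - q)‖
          ≤ ‖G p - G q‖ + ‖A.mulVec (p - q)‖ := norm_sub_le _ _
        _ ≤ (K₁:ℝ) * ‖p - q‖ + cA * ‖p - q‖ := by
            apply add_le_add
            · have := hKu₁.dist_le_mul _ (hball₁ hp) _ (hball₁ hq)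
              rwa [dist_eq_norm, dist_eq_norm] at this
            · exact hcAb _
        _ = (cA + (K₁:ℝ)) * ‖p - q‖ := by ring
    -- both solutions stay near y τ for a short time
    have hz_ev : ∀ᶠ s in 𝓝 τ, z s ∈ Metric.ball (y τ) ρ₁ := by
      apply (hzc τ hτ0).eventually_mem
      rw [hzyτ] at *
      exact Metric.ball_mem_nhds _ hρ₁
    have hy_ev : ∀ᶠ s in 𝓝 τ, y s ∈ Metric.ball (y τ) ρ₁ := by
      apply (hyc τ hτ0).eventually_mem
      exact Metric.ball_mem_nhds _ hρ₁
    obtain ⟨δ, hδ, hδs⟩ := Metric.eventually_nhds_iff.mp (hz_ev.and hy_ev)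
    set b' : ℝ := τ + δ / 2 with hb'def
    have hτb' : τ < b' := by rw [hb'def]; linarith
    have hmem : ∀ s ∈ Icc τ b', dist s τ < δ := by
      intro s hs
      rw [Real.dist_eq, abs_of_nonneg (by linarith [hs.1])]
      have := hs.2
      rw [hb'def] at this
      linarith
    have hEq := ODE_solution_unique_of_mem_Icc_right (v := W)
      (s := fun _ => Metric.ball (y τ) ρ₁) (K := (cA + (K₁:ℝ)).toNNReal)
      (fun t _ => hWlip t)
      (fun s hs => ((hzc s (le_trans hτ0 hs.1)).continuousWithinAt))
      (fun s hs => by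
        have hs0 : (0:ℝ) ≤ s := le_trans hτ0 hs.1
        have := (hzd s hs0).hasDerivWithinAt (s := Ici s)
        rw [hWdef]
        simp only []
        rw [hfext_eq s hs0]
        exact this)
      (fun s hs => (hδs (hmem s ⟨hs.1, hs.2.le⟩)).1)
      (fun s hs => ((hyc s (le_trans hτ0 hs.1)).continuousWithinAt))
      (fun s hs => by
        have hs0 : (0:ℝ) ≤ s := le_trans hτ0 hs.1
        have := (hyeq s hs0).hasDerivWithinAt (s := Ici s)
        rw [hWdef]
        simp only []
        rw [hfext_eq s hs0]
        exact this)
      (fun s hs => (hδs (hmem s ⟨hs.1, hs.2.le⟩)).2)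
      hzyτ
    obtain ⟨s, hsBad, hs⟩ := exists_lt_of_csInf_lt hne hτb'
    have hsτ : τ ≤ s := csInf_le hbdd hsBad
    exact hsBad.2 (hEq ⟨hsτ, hs.le⟩)
  · -- decay
    intro hf0
    have h1 : Tendsto (fun t : ℝ => max t 0) atTop atTop :=
      tendsto_atTop_mono (fun t => le_max_left t 0) tendsto_id
    have h2 : Tendsto fext atTop (𝓝 0) := hf0.comp h1
    have hFc0 : Tendsto Fc atTop (𝓝 0) := by
      have h3 := ((LinearMap.toContinuousLinearMap
        (Matrix.mulVecLin S)).continuous.tendsto 0).comp h2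
      simpa [hFcdef, Function.comp_def, Matrix.mulVecLin_apply] using h3
    have hx0' : Tendsto x atTop (𝓝 0) :=
      decay_lemma hlam hΛl hR hgc hFcont
        (fun p hp => hgq p (le_trans hp hRr₂)) hc₂.le hc₂R hxc hxdIci
        hxb hFc0
    have h4 : Tendsto (fun t => S⁻¹.mulVec (x t)) atTop (𝓝 0) := by
      have h5 := ((LinearMap.toContinuousLinearMap
        (Matrix.mulVecLin S⁻¹)).continuous.tendsto 0).comp hx0'
      simpa [Function.comp_def, Matrix.mulVecLin_apply] using h5
    apply Filter.Tendsto.congr' _ h4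
    filter_upwards [eventually_ge_atTop (0:ℝ)] with t ht
    exact (hy_eq t ht).symm
end

section
/- Let X be a normed space, m* ∈ ℤ≥0, T ∈ ℝ, g : (T,∞) → X, N ∈ ℕ, n_k ∈ ℕ and 0 ≤ γ_1 < γ_2 < … < γ_N. Suppose p_k ∈ P(n_k, X) for 1 ≤ k ≤ N satisfy ‖g(t) − Σ_{k=1}^N p_k(L_{m*+1}(t),…,L_{m*+n_k}(t)) L_{m*}(t)^{-γ_k}‖ = O(L_{m*}(t)^{-μ}) for some μ > γ_N. Then such functions p_1,…,p_N are unique. -/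
/-- The iterated logarithm: `L 0 t = t`, `L (m+1) t = log (L m t)`. -/
noncomputable def itLog : ℕ → ℝ → ℝ
  | 0 => fun t => t
  | m + 1 => fun t => Real.log (itLog m t)

/-- The class `P(k,X)` of finite sums of real-power monomials. -/
def MemP {X : Type*} [AddCommGroup X] [Module ℝ X] (k : ℕ)
    (p : (Fin k → ℝ) → X) : Prop :=
  ∃ (I : Finset (Fin k → ℝ)) (c : (Fin k → ℝ) → X), I.Nonempty ∧
    ∀ z : Fin k → ℝ, (∀ j, 0 < z j) →
      p z = ∑ α ∈ I, (∏ j, z j ^ α j) • c α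

open Filter Real Finset


lemma itLog_tendsto (m : ℕ) : Tendsto (itLog m) atTop atTop := by
  induction m with
  | zero => exact tendsto_id
  | succ m ih => exact tendsto_log_atTop.comp ih

lemma itLog_ev_pos (m : ℕ) : ∀ᶠ t in atTop, 0 < itLog m t :=
  (itLog_tendsto m).eventually_gt_atTop 0

lemma itLog_ev_pos_all (M : ℕ) : ∀ᶠ t in atTop, ∀ j < M, 0 < itLog j t := by
  induction M with
  | zero => exact Eventually.of_forall fun t j hj => absurd hj (Nat.not_lt_zero j)
  | succ M ih =>
    filter_upwards [ih, itLog_ev_pos M] with t h1 h2 j hj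
    rcases Nat.lt_succ_iff_lt_or_eq.mp hj with h | rfl
    · exact h1 j h
    · exact h2

lemma rpow_neg_mul_log_rpow (δ a : ℝ) (hδ : 0 < δ) :
    Tendsto (fun x : ℝ => x ^ (-δ) * Real.log x ^ a) atTop (nhds 0) := by
  have h := (isLittleO_log_rpow_rpow_atTop a hδ).tendsto_div_nhds_zero
  refine h.congr' ?_
  filter_upwards [eventually_gt_atTop (0:ℝ)] with x hx
  rw [rpow_neg hx.le, div_eq_inv_mul]

lemma keyLim (m : ℕ) (δ : ℝ) (hδ : 0 < δ) (n : ℕ) (α : ℕ → ℝ) :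
    Tendsto (fun t => itLog m t ^ (-δ) * ∏ j ∈ Finset.range n, itLog (m + 1 + j) t ^ α j)
      atTop (nhds 0) := by
  induction n generalizing m δ α with
  | zero =>
    simp only [Finset.range_zero, Finset.prod_empty, mul_one]
    exact (tendsto_rpow_neg_atTop hδ).comp (itLog_tendsto m)
  | succ n ih =>
    have h1 : Tendsto (fun t => itLog m t ^ (-δ) * itLog (m + 1) t ^ (α 0 + 1))
        atTop (nhds 0) := (rpow_neg_mul_log_rpow δ (α 0 + 1) hδ).comp (itLog_tendsto m)
    have h2 := ih (m + 1) 1 one_pos (fun j => α (j + 1))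
    have h3 := h1.mul h2
    rw [mul_zero] at h3
    refine h3.congr' ?_
    filter_upwards [itLog_ev_pos (m + 1)] with t ht
    rw [Finset.prod_range_succ']
    have e1 : (∏ j ∈ Finset.range n, itLog (m + 1 + (j + 1)) t ^ α (j + 1))
        = ∏ j ∈ Finset.range n, itLog (m + 1 + 1 + j) t ^ α (j + 1) :=
      Finset.prod_congr rfl fun j _ => by
        rw [show m + 1 + (j + 1) = m + 1 + 1 + j from by omega]
    rw [e1, show m + 1 + 0 = m + 1 from by omega]
    have eBC : itLog (m + 1) t ^ (α 0 + 1) * itLog (m + 1) t ^ (-(1:ℝ))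
        = itLog (m + 1) t ^ α 0 := by
      rw [← rpow_add ht]; norm_num
    calc itLog m t ^ (-δ) * itLog (m + 1) t ^ (α 0 + 1) *
          (itLog (m + 1) t ^ (-(1:ℝ)) * ∏ j ∈ Finset.range n, itLog (m + 1 + 1 + j) t ^ α (j + 1))
        = itLog m t ^ (-δ) * ((itLog (m + 1) t ^ (α 0 + 1) * itLog (m + 1) t ^ (-(1:ℝ))) *
            ∏ j ∈ Finset.range n, itLog (m + 1 + 1 + j) t ^ α (j + 1)) := by ring
      _ = _ := by rw [eBC]; ring

lemma prod_extend (m n M : ℕ) (h : n ≤ M) (α : ℕ → ℝ) (t : ℝ) :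
    ∏ j ∈ Finset.range n, itLog (m + 1 + j) t ^ α j
      = ∏ j ∈ Finset.range M, itLog (m + 1 + j) t ^ (if j < n then α j else 0) := by
  have hM : M = n + (M - n) := by omega
  rw [hM, Finset.prod_range_add]
  have h1 : ∏ j ∈ Finset.range n, itLog (m + 1 + j) t ^ (if j < n then α j else 0)
      = ∏ j ∈ Finset.range n, itLog (m + 1 + j) t ^ α j :=
    Finset.prod_congr rfl fun j hj => by rw [if_pos (Finset.mem_range.mp hj)]
  have h2 : ∏ x ∈ Finset.range (M - n),
      itLog (m + 1 + (n + x)) t ^ (if n + x < n then α (n + x) else 0) = 1 :=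
    Finset.prod_eq_one fun x _ => by rw [if_neg (by omega), rpow_zero]
  rw [h1, h2, mul_one]

lemma keyLim2 (m : ℕ) (δ : ℝ) (hδ : 0 < δ) (n₁ n₂ : ℕ) (a b : ℕ → ℝ) :
    Tendsto (fun t => itLog m t ^ (-δ) *
      ((∏ j ∈ Finset.range n₁, itLog (m + 1 + j) t ^ a j) *
       (∏ j ∈ Finset.range n₂, itLog (m + 1 + j) t ^ b j))) atTop (nhds 0) := by
  set M := max n₁ n₂ with hM
  have key := keyLim m δ hδ M (fun j => (if j < n₁ then a j else 0) + (if j < n₂ then b j else 0))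
  refine key.congr' ?_
  filter_upwards [itLog_ev_pos_all (m + 1 + M)] with t ht
  congr 1
  rw [prod_extend m n₁ M (le_max_left _ _) a t, prod_extend m n₂ M (le_max_right _ _) b t,
    ← Finset.prod_mul_distrib]
  exact Finset.prod_congr rfl fun j hj =>
    (rpow_add (ht _ (by have := Finset.mem_range.mp hj; omega)) _ _)

lemma lexLim (m n : ℕ) (a b : ℕ → ℝ) (i : ℕ) (hi : i < n)
    (heq : ∀ j < i, a j = b j) (hlt : b i < a i) :
    Tendsto (fun t => ∏ j ∈ Finset.range n, itLog (m + 1 + j) t ^ (b j - a j))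
      atTop (nhds 0) := by
  obtain ⟨s, rfl⟩ : ∃ s, n = i + (s + 1) := ⟨n - i - 1, by omega⟩
  have key := keyLim (m + 1 + i) (a i - b i) (by linarith) s
    (fun x => b (i + 1 + x) - a (i + 1 + x))
  refine key.congr fun t => ?_
  rw [Finset.prod_range_add, Finset.prod_range_succ']
  have h1 : ∏ j ∈ Finset.range i, itLog (m + 1 + j) t ^ (b j - a j) = 1 :=
    Finset.prod_eq_one fun j hj => by
      rw [heq j (Finset.mem_range.mp hj), sub_self, rpow_zero]
  have h2 : ∀ x : ℕ, m + 1 + (i + (x + 1)) = m + 1 + i + 1 + x := fun x => by omega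
  have h3 : ∀ x : ℕ, i + (x + 1) = i + 1 + x := fun x => by omega
  have e1 : (∏ x ∈ Finset.range s, itLog (m + 1 + (i + (x + 1))) t ^ (b (i + (x + 1)) - a (i + (x + 1))))
      = ∏ x ∈ Finset.range s, itLog (m + 1 + i + 1 + x) t ^ (b (i + 1 + x) - a (i + 1 + x)) :=
    Finset.prod_congr rfl fun x _ => by rw [h2 x, h3 x]
  rw [h1, one_mul, e1]
  rw [mul_comm, neg_sub]
  norm_num



/-- Lemma 5.2: uniqueness of finite asymptotic expansions with the
iterated-logarithm base functions: if `p_k, p'_k ∈ P(n_k, X)` both satisfy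
`‖g(t) − Σ_k p_k(L_{m*+1}(t),…,L_{m*+n_k}(t)) L_{m*}(t)^{-γ_k}‖ = O(L_{m*}(t)^{-μ})`
with `μ > γ_N`, then `p_k = p'_k` (on the positive orthant). -/
theorem stmt14 {X : Type*} [NormedAddCommGroup X] [NormedSpace ℝ X]
    (mstar : ℕ) (T : ℝ) (g : ℝ → X) (N : ℕ) (hN : 1 ≤ N)
    (nk : Fin N → ℕ) (hnk : ∀ kk, 1 ≤ nk kk)
    (γ : Fin N → ℝ) (hγ0 : ∀ kk, 0 ≤ γ kk) (hγ : StrictMono γ)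
    (p p' : ∀ kk : Fin N, (Fin (nk kk) → ℝ) → X)
    (hp : ∀ kk, MemP (nk kk) (p kk)) (hp' : ∀ kk, MemP (nk kk) (p' kk))
    (μ μ' : ℝ) (hμ : ∀ kk, γ kk < μ) (hμ' : ∀ kk, γ kk < μ')
    (hest : ∃ C T₀ : ℝ, 0 < C ∧ ∀ t ≥ T₀,
      ‖g t - ∑ kk, itLog mstar t ^ (-(γ kk)) •
        p kk (fun j => itLog (mstar + 1 + (j : ℕ)) t)‖ ≤ C * itLog mstar t ^ (-μ))
    (hest' : ∃ C T₀ : ℝ, 0 < C ∧ ∀ t ≥ T₀,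
      ‖g t - ∑ kk, itLog mstar t ^ (-(γ kk)) •
        p' kk (fun j => itLog (mstar + 1 + (j : ℕ)) t)‖ ≤ C * itLog mstar t ^ (-μ')) :
    ∀ (kk : Fin N) (z : Fin (nk kk) → ℝ), (∀ j, 0 < z j) → p kk z = p' kk z := by
  classical
  obtain ⟨C, T₀, hC, hbd⟩ := hest
  obtain ⟨C', T₀', hC', hbd'⟩ := hest'
  choose I c hIne hc using hp
  choose I' c' hIne' hc' using hp'
  set J : ∀ kk : Fin N, Finset (Fin (nk kk) → ℝ) := fun kk => I kk ∪ I' kk with hJdef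
  set d : ∀ kk : Fin N, (Fin (nk kk) → ℝ) → X :=
    fun kk β => (if β ∈ I kk then c kk β else 0) - (if β ∈ I' kk then c' kk β else 0) with hddef
  have hdiff : ∀ (kk : Fin N) (z : Fin (nk kk) → ℝ), (∀ j, 0 < z j) →
      p kk z - p' kk z = ∑ β ∈ J kk, (∏ j, z j ^ β j) • d kk β := by
    intro kk z hz
    rw [hc kk z hz, hc' kk z hz]
    have e1 : ∑ β ∈ J kk, (∏ j, z j ^ β j) • (if β ∈ I kk then c kk β else 0)
        = ∑ β ∈ I kk, (∏ j, z j ^ β j) • c kk β := by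
      rw [← Finset.sum_subset Finset.subset_union_left
        (fun β _ hβ => by rw [if_neg hβ, smul_zero])]
      exact Finset.sum_congr rfl fun β hβ => by rw [if_pos hβ]
    have e2 : ∑ β ∈ J kk, (∏ j, z j ^ β j) • (if β ∈ I' kk then c' kk β else 0)
        = ∑ β ∈ I' kk, (∏ j, z j ^ β j) • c' kk β := by
      rw [← Finset.sum_subset Finset.subset_union_right
        (fun β _ hβ => by rw [if_neg hβ, smul_zero])]
      exact Finset.sum_congr rfl fun β hβ => by rw [if_pos hβ]
    rw [← e1, ← e2, ← Finset.sum_sub_distrib]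
    exact Finset.sum_congr rfl fun β _ => (smul_sub _ _ _).symm
  have hd_mem : ∀ (kk : Fin N) (β : Fin (nk kk) → ℝ), d kk β ≠ 0 → β ∈ J kk := by
    intro kk β hne
    by_contra hmem
    rw [hJdef] at hmem
    simp only [Finset.mem_union] at hmem
    push_neg at hmem
    exact hne (by rw [hddef]; simp [if_neg hmem.1, if_neg hmem.2])
  suffices hzero : ∀ (kk : Fin N) (β : Fin (nk kk) → ℝ), d kk β = 0 by
    intro kk z hz
    have h := hdiff kk z hz
    simp only [hzero, smul_zero, Finset.sum_const_zero] at h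
    exact sub_eq_zero.mp h
  by_contra hcon
  push_neg at hcon
  obtain ⟨k1, β1, hk1⟩ := hcon
  have hSne : (Finset.univ.filter (fun kk : Fin N => ∃ β, d kk β ≠ 0)).Nonempty :=
    ⟨k1, Finset.mem_filter.mpr ⟨Finset.mem_univ _, β1, hk1⟩⟩
  set S := Finset.univ.filter (fun kk : Fin N => ∃ β, d kk β ≠ 0) with hSdef
  set k0 := S.min' hSne with hk0def
  obtain ⟨β0, hβ0⟩ : ∃ β, d k0 β ≠ 0 := (Finset.mem_filter.mp (S.min'_mem hSne)).2
  set supp := (J k0).filter (fun β => d k0 β ≠ 0) with hsuppdef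
  have hsuppne : supp.Nonempty := ⟨β0, Finset.mem_filter.mpr ⟨hd_mem _ _ hβ0, hβ0⟩⟩
  obtain ⟨m0, hm0mem, hm0max'⟩ := Finset.exists_maximal (hsuppne.image toLex)
  have hm0max : ∀ x ∈ supp.image toLex, ¬ m0 < x := fun x hx hlt => by
    rcases hm0max' hx hlt.le with h | h
    · subst h; exact lt_irrefl _ hlt
    · exact lt_asymm hlt h
  obtain ⟨α0, hα0supp, rfl⟩ := Finset.mem_image.mp hm0mem
  have hα0mem : α0 ∈ J k0 := (Finset.mem_filter.mp hα0supp).1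
  have hα0ne : d k0 α0 ≠ 0 := (Finset.mem_filter.mp hα0supp).2
  have hmax : ∀ β ∈ supp, β ≠ α0 → toLex β < toLex α0 := by
    intro β hβ hne
    have h1 : ¬ toLex α0 < toLex β := hm0max _ (Finset.mem_image_of_mem _ hβ)
    have h2 := (Pi.isTrichotomous_lex (· < ·) (fun {i} => ((· < ·) : ℝ → ℝ → Prop))
      (IsWellFounded.wf : WellFounded ((· < ·) : Fin (nk k0) → Fin (nk k0) → Prop))).trichotomous
      β α0
    by_contra h
    exact hne (h2 h h1)
  set Bf : ∀ kk : Fin N, ((Fin (nk kk) → ℝ)) → ℕ → ℝ :=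
    fun kk β j => if h : j < nk kk then β ⟨j, h⟩ else 0 with hBfdef
  set A : ℕ → ℝ := Bf k0 α0 with hAdef
  have monEq : ∀ (kk : Fin N) (β : Fin (nk kk) → ℝ) (t : ℝ),
      (∏ j : Fin (nk kk), itLog (mstar + 1 + (j : ℕ)) t ^ β j)
        = ∏ j ∈ Finset.range (nk kk), itLog (mstar + 1 + j) t ^ Bf kk β j := by
    intro kk β t
    rw [← Fin.prod_univ_eq_prod_range (fun j => itLog (mstar + 1 + j) t ^ Bf kk β j) (nk kk)]
    refine Finset.prod_congr rfl fun j _ => ?_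
    rw [hBfdef]
    simp
  set Mx := Finset.univ.sup nk with hMxdef
  have hMx : ∀ kk : Fin N, nk kk ≤ Mx := fun kk => Finset.le_sup (Finset.mem_univ kk)
  set q : ℝ → X := fun t =>
    (∑ kk, itLog mstar t ^ (-(γ kk)) • p kk (fun j => itLog (mstar + 1 + (j : ℕ)) t)) -
    (∑ kk, itLog mstar t ^ (-(γ kk)) • p' kk (fun j => itLog (mstar + 1 + (j : ℕ)) t)) with hqdef
  set sc : ℝ → ℝ := fun t =>
    itLog mstar t ^ (γ k0) * ∏ j ∈ Finset.range (nk k0), itLog (mstar + 1 + j) t ^ (-(A j))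
    with hscdef
  set F : ℝ → X := fun t => sc t • q t with hFdef
  have hposev : ∀ᶠ t in atTop,
      (0 < itLog mstar t ∧ ∀ j < Mx, 0 < itLog (mstar + 1 + j) t) := by
    filter_upwards [itLog_ev_pos_all (mstar + 1 + Mx)] with t ht
    exact ⟨ht mstar (by omega), fun j hj => ht _ (by omega)⟩
  -- first limit : F → 0
  have key1 : Tendsto F atTop (nhds 0) := by
    have l1 := (keyLim mstar (μ - γ k0) (by linarith [hμ k0]) (nk k0) (fun j => -(A j))).const_mul C
    have l2 := (keyLim mstar (μ' - γ k0) (by linarith [hμ' k0]) (nk k0)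
      (fun j => -(A j))).const_mul C'
    have lsum := l1.add l2
    rw [mul_zero, mul_zero, add_zero] at lsum
    apply squeeze_zero_norm' _ lsum
    filter_upwards [hposev, eventually_ge_atTop (max T₀ T₀')] with t hpos ht
    have h0 : 0 < itLog mstar t := hpos.1
    have hP : 0 ≤ ∏ j ∈ Finset.range (nk k0), itLog (mstar + 1 + j) t ^ (-(A j)) :=
      Finset.prod_nonneg fun j hj =>
        rpow_nonneg (hpos.2 j (lt_of_lt_of_le (Finset.mem_range.mp hj) (hMx k0))).le _
    have hsc0 : 0 ≤ sc t := by simp only [hscdef]; exact mul_nonneg (rpow_nonneg h0.le _) hP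
    have hq : ‖q t‖ ≤ C * itLog mstar t ^ (-μ) + C' * itLog mstar t ^ (-μ') := by
      have e : q t =
          (g t - ∑ kk, itLog mstar t ^ (-(γ kk)) • p' kk (fun j => itLog (mstar + 1 + (j:ℕ)) t))
          - (g t - ∑ kk, itLog mstar t ^ (-(γ kk)) • p kk (fun j => itLog (mstar + 1 + (j:ℕ)) t))
          := by simp only [hqdef]; abel
      rw [e]
      refine (norm_sub_le _ _).trans ?_
      have b1 := hbd' t (le_trans (le_max_right T₀ T₀') ht)
      have b2 := hbd t (le_trans (le_max_left T₀ T₀') ht)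
      linarith
    have r1 : itLog mstar t ^ (γ k0) * itLog mstar t ^ (-μ)
        = itLog mstar t ^ (-(μ - γ k0)) := by
      rw [← rpow_add h0]; congr 1; ring
    have r2 : itLog mstar t ^ (γ k0) * itLog mstar t ^ (-μ')
        = itLog mstar t ^ (-(μ' - γ k0)) := by
      rw [← rpow_add h0]; congr 1; ring
    calc ‖F t‖ = sc t * ‖q t‖ := by
          simp only [hFdef, norm_smul, Real.norm_eq_abs, abs_of_nonneg hsc0]
      _ ≤ sc t * (C * itLog mstar t ^ (-μ) + C' * itLog mstar t ^ (-μ')) :=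
          mul_le_mul_of_nonneg_left hq hsc0
      _ = C * (itLog mstar t ^ (-(μ - γ k0)) *
            ∏ j ∈ Finset.range (nk k0), itLog (mstar + 1 + j) t ^ (-(A j)))
          + C' * (itLog mstar t ^ (-(μ' - γ k0)) *
            ∏ j ∈ Finset.range (nk k0), itLog (mstar + 1 + j) t ^ (-(A j))) := by
          simp only [hscdef]
          rw [← r1, ← r2]; ring
  -- second limit : F → d k0 α0
  have curvepos : ∀ᶠ t in atTop,
      ∀ (kk : Fin N) (j : Fin (nk kk)), 0 < itLog (mstar + 1 + (j : ℕ)) t := by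
    filter_upwards [hposev] with t ht kk j
    exact ht.2 j (lt_of_lt_of_le j.isLt (hMx kk))
  set coef : ∀ kk : Fin N, ((Fin (nk kk) → ℝ)) → ℝ → ℝ := fun kk β t =>
    sc t * (itLog mstar t ^ (-(γ kk)) *
      ∏ j ∈ Finset.range (nk kk), itLog (mstar + 1 + j) t ^ Bf kk β j) with hcoefdef
  have hFeq : ∀ᶠ t in atTop, F t = ∑ kk, ∑ β ∈ J kk, coef kk β t • d kk β := by
    filter_upwards [curvepos] with t ht
    simp only [hFdef]
    have hqq : q t = ∑ kk, itLog mstar t ^ (-(γ kk)) •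
        (∑ β ∈ J kk, (∏ j ∈ Finset.range (nk kk), itLog (mstar + 1 + j) t ^ Bf kk β j)
          • d kk β) := by
      simp only [hqdef]
      rw [← Finset.sum_sub_distrib]
      refine Finset.sum_congr rfl fun kk _ => ?_
      rw [← smul_sub, hdiff kk _ (ht kk)]
      congr 1
      exact Finset.sum_congr rfl fun β _ => by rw [monEq kk β t]
    rw [hqq, Finset.smul_sum]
    refine Finset.sum_congr rfl fun kk _ => ?_
    rw [Finset.smul_sum, Finset.smul_sum]
    refine Finset.sum_congr rfl fun β _ => ?_
    simp only [hcoefdef, smul_smul, mul_assoc]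
  have key2 : Tendsto F atTop (nhds (d k0 α0)) := by
    have hsum : (∑ kk : Fin N, if kk = k0 then d k0 α0 else 0) = d k0 α0 := by
      rw [Finset.sum_ite_eq' Finset.univ k0 (fun _ => d k0 α0), if_pos (Finset.mem_univ _)]
    have main : Tendsto (fun t => ∑ kk, ∑ β ∈ J kk, coef kk β t • d kk β) atTop
        (nhds (∑ kk : Fin N, if kk = k0 then d k0 α0 else 0)) := by
      refine tendsto_finset_sum _ fun kk _ => ?_
      by_cases hkk : kk = k0
      · subst hkk
        rw [if_pos rfl]
        have hsum2 : d k0 α0 = ∑ β ∈ J k0, (if β = α0 then d k0 α0 else 0) := by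
          rw [Finset.sum_ite_eq' (J k0) α0 (fun _ => d k0 α0), if_pos hα0mem]
        rw [hsum2]
        refine tendsto_finset_sum _ fun β hβ => ?_
        by_cases hβα : β = α0
        · subst hβα
          rw [if_pos rfl]
          have hco : ∀ᶠ t in atTop, coef k0 β t = 1 := by
            filter_upwards [hposev] with t hpos
            simp only [hcoefdef, hscdef]
            have h0 : 0 < itLog mstar t := hpos.1
            set L1 := itLog mstar t ^ (γ k0) with hL1
            set L2 := itLog mstar t ^ (-(γ k0)) with hL2
            set PA := ∏ j ∈ Finset.range (nk k0), itLog (mstar + 1 + j) t ^ (-(A j)) with hPA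
            set PB := ∏ j ∈ Finset.range (nk k0), itLog (mstar + 1 + j) t ^ Bf k0 β j with hPB
            have e0 : L1 * L2 = 1 := by
              rw [hL1, hL2, ← rpow_add h0, add_neg_cancel, rpow_zero]
            have eP : PA * PB = 1 := by
              rw [hPA, hPB, ← Finset.prod_mul_distrib]
              refine Finset.prod_eq_one fun j hj => ?_
              rw [← rpow_add (hpos.2 j (lt_of_lt_of_le (Finset.mem_range.mp hj) (hMx k0))),
                hAdef, neg_add_cancel, rpow_zero]
            calc L1 * PA * (L2 * PB) = (L1 * L2) * (PA * PB) := by ring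
              _ = 1 := by rw [e0, eP, one_mul]
          refine Tendsto.congr' ?_ (tendsto_const_nhds : Tendsto (fun _ : ℝ => d k0 β) atTop _)
          filter_upwards [hco] with t ht
          rw [ht, one_smul]
        · rw [if_neg hβα]
          by_cases hd0 : d k0 β = 0
          · rw [hd0]
            simpa using (tendsto_const_nhds : Tendsto (fun _ : ℝ => (0:X)) atTop _)
          · have hβsupp : β ∈ supp := Finset.mem_filter.mpr ⟨hβ, hd0⟩
            have hlex : toLex β < toLex α0 := hmax β hβsupp hβα
            obtain ⟨i, hieq, hilt⟩ := hlex
            have hco : Tendsto (fun t => coef k0 β t) atTop (nhds 0) := by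
              have heq : ∀ j < (i : ℕ), A j = Bf k0 β j := by
                intro j hj
                have hjn : j < nk k0 := lt_trans hj i.isLt
                rw [hAdef, hBfdef]
                simp only [dif_pos hjn]
                exact (hieq ⟨j, hjn⟩ (by simpa [Fin.lt_def] using hj)).symm
              have hlt : Bf k0 β (i : ℕ) < A (i : ℕ) := by
                rw [hAdef, hBfdef]
                simp only [dif_pos i.isLt]
                simpa using hilt
              have key := lexLim mstar (nk k0) A (Bf k0 β) (i : ℕ) i.isLt heq hlt
              refine Tendsto.congr' ?_ key
              filter_upwards [hposev] with t hpos
              have h0 : 0 < itLog mstar t := hpos.1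
              simp only [hcoefdef, hscdef]
              set L1 := itLog mstar t ^ (γ k0) with hL1
              set L2 := itLog mstar t ^ (-(γ k0)) with hL2
              set PA := ∏ j ∈ Finset.range (nk k0), itLog (mstar + 1 + j) t ^ (-(A j)) with hPA
              set PB := ∏ j ∈ Finset.range (nk k0), itLog (mstar + 1 + j) t ^ Bf k0 β j with hPB
              have e0 : L1 * L2 = 1 := by
                rw [hL1, hL2, ← rpow_add h0, add_neg_cancel, rpow_zero]
              have eP : PA * PB
                  = ∏ j ∈ Finset.range (nk k0), itLog (mstar + 1 + j) t ^ (Bf k0 β j - A j) := by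
                rw [hPA, hPB, ← Finset.prod_mul_distrib]
                refine Finset.prod_congr rfl fun j hj => ?_
                rw [← rpow_add (hpos.2 j (lt_of_lt_of_le (Finset.mem_range.mp hj) (hMx k0)))]
                congr 1; ring
              calc ∏ j ∈ Finset.range (nk k0), itLog (mstar + 1 + j) t ^ (Bf k0 β j - A j)
                  = (L1 * L2) * (PA * PB) := by rw [e0, eP, one_mul]
                _ = L1 * PA * (L2 * PB) := by ring
            simpa using hco.smul_const (d k0 β)
      · rw [if_neg hkk]
        have inner : Tendsto (fun t => ∑ β ∈ J kk, coef kk β t • d kk β) atTop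
            (nhds (∑ β ∈ J kk, (0 : X))) := by
          refine tendsto_finset_sum _ fun β hβ => ?_
          by_cases hd0 : d kk β = 0
          · rw [hd0]
            simpa using (tendsto_const_nhds : Tendsto (fun _ : ℝ => (0:X)) atTop _)
          · have hk0le : k0 ≤ kk :=
              S.min'_le kk (Finset.mem_filter.mpr ⟨Finset.mem_univ _, β, hd0⟩)
            have hk0lt : k0 < kk := lt_of_le_of_ne hk0le (Ne.symm hkk)
            have hγlt : γ k0 < γ kk := hγ hk0lt
            have hco : Tendsto (fun t => coef kk β t) atTop (nhds 0) := by
              have key := keyLim2 mstar (γ kk - γ k0) (by linarith) (nk k0) (nk kk)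
                (fun j => -(A j)) (Bf kk β)
              refine Tendsto.congr' ?_ key
              filter_upwards [hposev] with t hpos
              have h0 : 0 < itLog mstar t := hpos.1
              simp only [hcoefdef, hscdef]
              have e0 : itLog mstar t ^ (-(γ kk - γ k0))
                  = itLog mstar t ^ (γ k0) * itLog mstar t ^ (-(γ kk)) := by
                rw [← rpow_add h0]; congr 1; ring
              rw [e0]; ring
            simpa using hco.smul_const (d kk β)
        simpa using inner
    rw [hsum] at main
    have hFeq' : F =ᶠ[atTop] fun t => ∑ kk, ∑ β ∈ J kk, coef kk β t • d kk β := hFeq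
    exact Tendsto.congr' hFeq'.symm main
  exact hα0ne (tendsto_nhds_unique key2 key1)
end
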